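/- arXiv:math/0110257 — 4 statements merged into one kernel-verified Lean document; each statement's English description precedes it below -/
import Mathlib

section
/- Let G be a finite group and let V₁, …, V_ℓ be irreducible finite-dimensional complex representations of G, each of which is self-dual. Let ν_i := |G|⁻¹ ∑_{g∈G} χ_{V_i}(g²) be the Frobenius–Schur indicator of V_i (so ν_i ∈ {+1, −1}). If ∏_{i=1}^ℓ ν_i = −1, then the dimension of the space of G-invariants (V₁ ⊗ V₂ ⊗ ⋯ ⊗ V_ℓ)^G is even. -/
open scoped TensorProduct

noncomputable section

/-- The Frobenius–Schur indicator of a representation of a finite group `G`: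
`ν(V) = |G|⁻¹ ∑_{g ∈ G} χ_V(g²)`. -/
def fsIndicator (G : Type*) [Group G] [Fintype G] {W : Type*} [AddCommGroup W] [Module ℂ W]
    (ρ : Representation ℂ G W) : ℂ :=
  (Fintype.card G : ℂ)⁻¹ * ∑ g : G, LinearMap.trace ℂ W (ρ (g * g))

/-- A representation is irreducible if the space is nonzero and the only subspaces stable
under all `ρ g` are `⊥` and `⊤`. -/
def RepIsIrreducible {G W : Type*} [Group G] [AddCommGroup W] [Module ℂ W]
    (ρ : Representation ℂ G W) : Prop :=
  Nontrivial W ∧ ∀ p : Submodule ℂ W, (∀ g : G, ∀ x ∈ p, ρ g x ∈ p) → p = ⊥ ∨ p = ⊤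

/-- A representation is self-dual if it is isomorphic, as a `G`-representation, to its dual
equipped with the contragredient action. -/
def RepIsSelfDual {G W : Type*} [Group G] [AddCommGroup W] [Module ℂ W]
    (ρ : Representation ℂ G W) : Prop :=
  ∃ e : W ≃ₗ[ℂ] Module.Dual ℂ W, ∀ (g : G) (v : W), e (ρ g v) = ρ.dual g (e v)

/-- The diagonal action of `G` on the tensor product `V₁ ⊗ V₂ ⊗ ⋯ ⊗ V_ℓ`. -/
def piTensorRep {ℓ : ℕ} {G : Type*} [Group G] {V : Fin ℓ → Type*}
    [∀ i, AddCommGroup (V i)] [∀ i, Module ℂ (V i)]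
    (ρ : ∀ i, Representation ℂ G (V i)) : Representation ℂ G (⨂[ℂ] i, V i) :=
  PiTensorProduct.mapMonoidHom.comp (Pi.monoidHom ρ)


/-- Pure tensors of basis vectors span the tensor product. -/
lemma span_basis_tprod {ℓ : ℕ} {V : Fin ℓ → Type*} [∀ i, AddCommGroup (V i)]
    [∀ i, Module ℂ (V i)] {κ : Fin ℓ → Type*} [∀ i, Fintype (κ i)]
    (b : ∀ i, Module.Basis (κ i) ℂ (V i)) (z : ⨂[ℂ] i, V i) :
    z ∈ Submodule.span ℂ
      (Set.range fun k : (∀ i, κ i) => PiTensorProduct.tprod ℂ fun i => b i (k i)) := by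
  classical
  induction z using PiTensorProduct.induction_on' with
  | tprodCoeff r f =>
    rw [PiTensorProduct.tprodCoeff_eq_smul_tprod]
    apply Submodule.smul_mem
    have hf : f = fun i => ∑ j : κ i, (b i).repr (f i) j • b i j := by
      funext i
      exact ((b i).sum_repr (f i)).symm
    rw [hf, MultilinearMap.map_sum]
    apply Submodule.sum_mem
    intro k _
    rw [MultilinearMap.map_smul_univ]
    exact Submodule.smul_mem _ _ (Submodule.subset_span ⟨k, rfl⟩)
  | add x y hx hy => exact Submodule.add_mem _ hx hy

/-- A finite-dimensional complex space with a nondegenerate alternating bilinear form is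
even-dimensional. -/
lemma even_finrank_of_skew {U : Type*} [AddCommGroup U] [Module ℂ U] [FiniteDimensional ℂ U]
    (B : U →ₗ[ℂ] U →ₗ[ℂ] ℂ) (hskew : ∀ x y : U, B x y = - B y x)
    (hnd : ∀ u : U, (∀ w : U, B u w = 0) → u = 0) :
    Even (Module.finrank ℂ U) := by
  classical
  by_contra hodd
  rw [Nat.not_even_iff_odd] at hodd
  set n := Module.finrank ℂ U
  set b := Module.finBasis ℂ U
  set M : Matrix (Fin n) (Fin n) ℂ := Matrix.of fun k l => B (b k) (b l) with hM
  have hdet : M.det = 0 := by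
    have hMT : M.transpose = -M := by
      ext k l
      simp only [Matrix.transpose_apply, Matrix.neg_apply, hM, Matrix.of_apply]
      exact hskew (b l) (b k)
    have h1 : M.det = (-1) ^ n * M.det := by
      conv_lhs => rw [← Matrix.det_transpose, hMT, Matrix.det_neg]
      simp
    rw [Odd.neg_one_pow hodd] at h1
    have : (2 : ℂ) * M.det = 0 := by linear_combination h1
    simpa using this
  obtain ⟨v, hv0, hv⟩ := Matrix.exists_mulVec_eq_zero_iff.mpr hdet
  set u : U := ∑ l, v l • b l with hu
  have hku : ∀ k, B (b k) u = 0 := by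
    intro k
    have := congrFun hv k
    simp only [Matrix.mulVec, dotProduct, Pi.zero_apply] at this
    rw [hu, map_sum]
    rw [← this]
    apply Finset.sum_congr rfl
    intro l _
    simp [hM, mul_comm]
  have hall : ∀ x : U, B x u = 0 := by
    have : B.flip u = 0 := b.ext fun k => by simpa using hku k
    intro x
    have := congrArg (fun φ => φ x) this
    simpa using this
  have hu0 : u = 0 := by
    apply hnd
    intro w
    rw [hskew, hall w, neg_zero]
  apply hv0
  have : Module.Finite ℂ U := inferInstance
  have h2 : b.equivFun.symm v = 0 := by
    rw [Module.Basis.equivFun_symm_apply, ← hu, hu0]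
  have := congrArg b.equivFun h2
  rwa [b.equivFun.apply_symm_apply, map_zero] at this

/-- trace of flip ∘ (A ⊗ B) equals trace (A ∘ B). -/
lemma trace_comm_comp_map {V : Type*} [AddCommGroup V] [Module ℂ V] [FiniteDimensional ℂ V]
    (A B : V →ₗ[ℂ] V) :
    LinearMap.trace ℂ (V ⊗[ℂ] V)
      (((TensorProduct.comm ℂ V V : V ⊗[ℂ] V ≃ₗ[ℂ] V ⊗[ℂ] V) : V ⊗[ℂ] V →ₗ[ℂ] V ⊗[ℂ] V)
        ∘ₗ TensorProduct.map A B) = LinearMap.trace ℂ V (A ∘ₗ B) := by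
  classical
  set b := Module.finBasis ℂ V
  set bb := Module.Basis.tensorProduct b b
  rw [LinearMap.trace_eq_matrix_trace ℂ bb, LinearMap.trace_eq_matrix_trace ℂ b]
  rw [Matrix.trace, Matrix.trace]
  simp only [Matrix.diag, LinearMap.toMatrix_apply]
  rw [Fintype.sum_prod_type]
  have key : ∀ i j, bb.repr
      ((((TensorProduct.comm ℂ V V : V ⊗[ℂ] V ≃ₗ[ℂ] V ⊗[ℂ] V) : V ⊗[ℂ] V →ₗ[ℂ] V ⊗[ℂ] V)
        ∘ₗ TensorProduct.map A B) (bb (i, j))) (i, j)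
      = b.repr (B (b j)) i * b.repr (A (b i)) j := by
    intro i j
    simp only [bb, Module.Basis.tensorProduct_apply, LinearMap.comp_apply, TensorProduct.map_tmul,
      LinearEquiv.coe_coe, TensorProduct.comm_tmul, Module.Basis.tensorProduct_repr_tmul_apply]
    rw [smul_eq_mul, mul_comm]
  simp only [key]
  rw [Finset.sum_comm]
  congr 1
  ext j
  have : A (B (b j)) = A (∑ i, b.repr (B (b j)) i • b i) := by rw [b.sum_repr]
  rw [LinearMap.comp_apply, this, map_sum, map_sum, Finsupp.finset_sum_apply]
  exact Finset.sum_congr rfl fun i _ => by simp [mul_comm]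

/-- Schur: an endomorphism commuting with an irreducible representation is scalar. -/
lemma schur_scalar {G V : Type*} [Group G] [AddCommGroup V] [Module ℂ V]
    [FiniteDimensional ℂ V] (ρ : Representation ℂ G V) (hirr : RepIsIrreducible ρ)
    (f : V →ₗ[ℂ] V) (hf : ∀ g, f ∘ₗ ρ g = ρ g ∘ₗ f) :
    ∃ c : ℂ, f = c • LinearMap.id := by
  haveI : Nontrivial V := hirr.1
  obtain ⟨c, hc⟩ := Module.End.exists_eigenvalue (f : Module.End ℂ V)
  refine ⟨c, ?_⟩
  have hstab : ∀ g : G, ∀ x ∈ Module.End.eigenspace f c, ρ g x ∈ Module.End.eigenspace f c := by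
    intro g x hx
    rw [Module.End.mem_eigenspace_iff] at hx ⊢
    have := congrArg (fun φ => φ x) (hf g)
    simp only [LinearMap.comp_apply] at this
    rw [this, hx, map_smul]
  rcases hirr.2 _ hstab with h | h
  · exact absurd h hc
  · ext x
    have hx : x ∈ Module.End.eigenspace f c := h ▸ Submodule.mem_top
    rw [Module.End.mem_eigenspace_iff] at hx
    simpa using hx

/-- Key per-representation lemma: for a self-dual irreducible representation, the canonical
invariant bilinear form has symmetry sign equal to the Frobenius–Schur indicator. -/
lemma fs_sign {G V : Type*} [Group G] [Fintype G] [AddCommGroup V] [Module ℂ V]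
    [FiniteDimensional ℂ V] (ρ : Representation ℂ G V) (hirr : RepIsIrreducible ρ)
    (e : V ≃ₗ[ℂ] Module.Dual ℂ V) (he : ∀ (g : G) (v : V), e (ρ g v) = ρ.dual g (e v)) :
    ∀ x y : V, e y x = fsIndicator G ρ * e x y := by
  classical
  haveI : Nontrivial V := hirr.1
  -- invariance of the form
  have hinv : ∀ (g : G) (x y : V), e (ρ g x) (ρ g y) = e x y := by
    intro g x y
    rw [he]
    show (e x) (ρ g⁻¹ (ρ g y)) = e x y
    rw [← Module.End.mul_apply, ← map_mul, inv_mul_cancel, map_one, Module.End.one_apply]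
  -- every invariant form is a multiple of e
  have hmul : ∀ bmap : V →ₗ[ℂ] Module.Dual ℂ V,
      (∀ (g : G) (x y : V), bmap (ρ g x) (ρ g y) = bmap x y) →
      ∃ c : ℂ, ∀ x : V, bmap x = c • e x := by
    intro bmap hb
    have hcomm : ∀ g : G, (e.symm.toLinearMap ∘ₗ bmap) ∘ₗ ρ g
        = ρ g ∘ₗ (e.symm.toLinearMap ∘ₗ bmap) := by
      intro g
      apply LinearMap.ext
      intro x
      apply e.injective
      simp only [LinearMap.comp_apply, LinearEquiv.coe_coe, e.apply_symm_apply, he]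
      apply LinearMap.ext
      intro y
      show bmap (ρ g x) y = (bmap x) (ρ g⁻¹ y)
      have := hb g x (ρ g⁻¹ y)
      rwa [show ρ g (ρ g⁻¹ y) = y by
        rw [← Module.End.mul_apply, ← map_mul, mul_inv_cancel, map_one, Module.End.one_apply]] at this
    obtain ⟨c, hc⟩ := schur_scalar ρ hirr _ hcomm
    refine ⟨c, fun x => ?_⟩
    have : e.symm (bmap x) = c • x := by
      have := congrArg (fun φ => φ x) hc
      simpa using this
    apply_fun e at this
    rwa [e.apply_symm_apply, map_smul] at this
  -- the tensor square representation
  set σ : Representation ℂ G (V ⊗[ℂ] V) := Representation.tprod ρ ρ with hσ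
  set Φ : V ⊗[ℂ] V ≃ₗ[ℂ] (V →ₗ[ℂ] V) :=
    (TensorProduct.congr e (LinearEquiv.refl ℂ V)).trans (dualTensorHomEquiv ℂ V V) with hΦdef
  have hΦ : ∀ (g : G) (z : V ⊗[ℂ] V), Φ (σ g z) = ρ g ∘ₗ Φ z ∘ₗ ρ g⁻¹ := by
    intro g z
    induction z with
    | zero => simp
    | add a b ha hb => simp [map_add, ha, hb, LinearMap.comp_add, LinearMap.add_comp]
    | tmul x y =>
      apply LinearMap.ext
      intro v
      simp only [hΦdef, hσ, Representation.tprod_apply, TensorProduct.map_tmul,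
        LinearEquiv.trans_apply, TensorProduct.congr_tmul, LinearEquiv.refl_apply,
        dualTensorHomEquiv, dualTensorHomEquivOfBasis_apply, dualTensorHom_apply,
        LinearMap.comp_apply, LinearEquiv.ofBijective_apply]
      rw [he, map_smul]
      rfl
  set u₀ : V ⊗[ℂ] V := Φ.symm LinearMap.id with hu₀def
  have hΦu₀ : Φ u₀ = LinearMap.id := Φ.apply_symm_apply _
  have hu0inv : ∀ g : G, σ g u₀ = u₀ := by
    intro g
    apply Φ.injective
    rw [hΦ, hΦu₀]
    apply LinearMap.ext
    intro v
    simp only [LinearMap.comp_apply, LinearMap.id_apply, LinearMap.id_coe, id_eq]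
    rw [← Module.End.mul_apply, ← map_mul, mul_inv_cancel, map_one, Module.End.one_apply]
  have hu0ne : u₀ ≠ 0 := by
    intro h
    have : (LinearMap.id : V →ₗ[ℂ] V) = 0 := by rw [← hΦu₀, h, map_zero]
    obtain ⟨x, hx⟩ := exists_ne (0 : V)
    exact hx (by simpa using congrArg (fun φ => φ x) this)
  have hspan : ∀ z : V ⊗[ℂ] V, (∀ g : G, σ g z = z) → ∃ c : ℂ, z = c • u₀ := by
    intro z hz
    have hcomm : ∀ g : G, Φ z ∘ₗ ρ g = ρ g ∘ₗ Φ z := by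
      intro g
      have h1 : Φ z = ρ g ∘ₗ Φ z ∘ₗ ρ g⁻¹ := by rw [← hΦ, hz]
      apply LinearMap.ext
      intro v
      have := congrArg (fun φ => φ (ρ g v)) h1
      simp only [LinearMap.comp_apply] at this ⊢
      have hvv : (ρ g⁻¹) ((ρ g) v) = v := by
        rw [← Module.End.mul_apply, ← map_mul, inv_mul_cancel, map_one, Module.End.one_apply]
      rw [this, hvv]
    obtain ⟨c, hc⟩ := schur_scalar ρ hirr (Φ z) hcomm
    exact ⟨c, by rw [← Φ.symm_apply_apply z, hc, map_smul, ← hu₀def]⟩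
  -- the form as functional on the tensor square
  set β : V ⊗[ℂ] V →ₗ[ℂ] ℂ := TensorProduct.lift (e.toLinearMap) with hβdef
  have hβ : ∀ x y : V, β (x ⊗ₜ[ℂ] y) = e x y := fun x y => rfl
  have hβu₀ : β u₀ = (Module.finrank ℂ V : ℂ) := by
    have hfac : β ∘ₗ (TensorProduct.congr e (LinearEquiv.refl ℂ V)).symm.toLinearMap
        = contractLeft ℂ V := by
      apply TensorProduct.ext'
      intro f y
      simp only [LinearMap.comp_apply, LinearEquiv.coe_coe, TensorProduct.congr_symm_tmul,
        LinearEquiv.refl_symm, LinearEquiv.refl_apply, contractLeft_apply]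
      rw [hβ, e.apply_symm_apply]
    have hu₀eq : u₀ = (TensorProduct.congr e (LinearEquiv.refl ℂ V)).symm
        ((dualTensorHomEquiv ℂ V V).symm LinearMap.id) := rfl
    have hcl := congrArg (fun φ => φ ((dualTensorHomEquiv ℂ V V).symm LinearMap.id)) hfac
    simp only [LinearMap.comp_apply, LinearEquiv.coe_coe] at hcl
    rw [hu₀eq, hcl, ← LinearMap.trace_eq_contract, LinearMap.comp_apply]
    have : dualTensorHom ℂ V V ((dualTensorHomEquiv ℂ V V).symm LinearMap.id)
        = LinearMap.id := by
      rw [← dualTensorHomEquivOfBasis_apply (Module.Free.chooseBasis ℂ V)]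
      exact (dualTensorHomEquiv ℂ V V).apply_symm_apply _
    rw [this, LinearMap.trace_id]
  have hdim : (Module.finrank ℂ V : ℂ) ≠ 0 := by
    exact Nat.cast_ne_zero.mpr Module.finrank_pos.ne'
  -- the flip
  set S : V ⊗[ℂ] V →ₗ[ℂ] V ⊗[ℂ] V :=
    ((TensorProduct.comm ℂ V V : V ⊗[ℂ] V ≃ₗ[ℂ] V ⊗[ℂ] V) : V ⊗[ℂ] V →ₗ[ℂ] V ⊗[ℂ] V) with hSdef
  have hStmul : ∀ x y : V, S (x ⊗ₜ[ℂ] y) = y ⊗ₜ[ℂ] x := fun x y => rfl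
  have hSσ : ∀ (g : G) (z : V ⊗[ℂ] V), S (σ g z) = σ g (S z) := by
    intro g z
    induction z with
    | zero => simp
    | add a b ha hb => simp only [map_add, ha, hb]
    | tmul x y => simp [hσ, Representation.tprod_apply, hStmul]
  obtain ⟨c, hc⟩ : ∃ c : ℂ, S u₀ = c • u₀ :=
    hspan _ (fun g => by rw [← hSσ, hu0inv])
  -- transpose form is c' times e, and c' = c
  obtain ⟨c', hc'⟩ : ∃ c' : ℂ, ∀ x y : V, e y x = c' * e x y := by
    obtain ⟨c', h⟩ := hmul (LinearMap.flip (e : V →ₗ[ℂ] Module.Dual ℂ V))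
      (fun g x y => hinv g y x)
    exact ⟨c', fun x y => by simpa using congrArg (fun φ => φ y) (h x)⟩
  have hβS : ∀ z : V ⊗[ℂ] V, β (S z) = c' * β z := by
    intro z
    induction z with
    | zero => simp
    | add a b ha hb => simp only [map_add, ha, hb]; ring
    | tmul x y => rw [hStmul, hβ, hβ, hc']
  have hcc' : c = c' := by
    have h1 : β (S u₀) = c * (Module.finrank ℂ V : ℂ) := by rw [hc, map_smul, hβu₀]; rfl
    have h2 : β (S u₀) = c' * (Module.finrank ℂ V : ℂ) := by rw [hβS, hβu₀]
    exact mul_right_cancel₀ hdim (h1.symm.trans h2)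
  -- the averaging projector
  set P : V ⊗[ℂ] V →ₗ[ℂ] V ⊗[ℂ] V := (Fintype.card G : ℂ)⁻¹ • ∑ g : G, σ g with hPdef
  have hcard : (Fintype.card G : ℂ) ≠ 0 := Nat.cast_ne_zero.mpr Fintype.card_ne_zero
  have hPinv : ∀ (h : G) (z : V ⊗[ℂ] V), σ h (P z) = P z := by
    intro h z
    simp only [hPdef, LinearMap.smul_apply, LinearMap.sum_apply, map_smul, map_sum]
    congr 1
    have : ∀ g : G, σ h (σ g z) = σ (h * g) z := by
      intro g; rw [map_mul, Module.End.mul_apply]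
    simp only [this]
    exact Fintype.sum_bijective (fun g => h * g) (Group.mulLeft_bijective h)
      (fun g => σ (h * g) z) (fun g => σ g z) (fun g => rfl)
  have hPfix : P u₀ = u₀ := by
    simp only [hPdef, LinearMap.smul_apply, LinearMap.sum_apply, hu0inv,
      Finset.sum_const, Finset.card_univ, smul_smul]
    rw [← Nat.cast_smul_eq_nsmul ℂ, smul_smul, inv_mul_cancel₀ hcard, one_smul]
  have hSP : S ∘ₗ P = c • P := by
    apply LinearMap.ext
    intro z
    obtain ⟨t, ht⟩ := hspan (P z) (fun h => hPinv h z)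
    simp only [LinearMap.comp_apply, LinearMap.smul_apply, ht, map_smul, hc, smul_smul, mul_comm]
  have hT1 : LinearMap.trace ℂ (V ⊗[ℂ] V) (S ∘ₗ P) = fsIndicator G ρ := by
    have hdist : S ∘ₗ P = (Fintype.card G : ℂ)⁻¹ • ∑ g : G, (S ∘ₗ σ g) := by
      apply LinearMap.ext
      intro z
      simp [hPdef, LinearMap.smul_apply, LinearMap.sum_apply, map_smul, map_sum]
    rw [hdist, map_smul, map_sum, fsIndicator, smul_eq_mul]
    congr 1
    apply Finset.sum_congr rfl
    intro g _
    have hσg : σ g = TensorProduct.map (ρ g) (ρ g) := Representation.tprod_apply ρ ρ g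
    rw [hσg, hSdef, trace_comm_comp_map, ← Module.End.mul_eq_comp, ← map_mul]
  have hT2 : LinearMap.trace ℂ (V ⊗[ℂ] V) (S ∘ₗ P) = c := by
    rw [hSP, map_smul, smul_eq_mul]
    have hproj : LinearMap.IsProj (Submodule.span ℂ {u₀}) P := by
      refine ⟨fun z => ?_, fun z hz => ?_⟩
      · obtain ⟨t, ht⟩ := hspan (P z) (fun h => hPinv h z)
        rw [ht]
        exact Submodule.smul_mem _ _ (Submodule.mem_span_singleton_self u₀)
      · obtain ⟨t, ht⟩ := Submodule.mem_span_singleton.mp hz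
        rw [← ht, map_smul, hPfix]
    rw [hproj.trace, finrank_span_singleton hu0ne]
    simp
  have hfs : fsIndicator G ρ = c' := by rw [← hT1, hT2, hcc']
  intro x y
  rw [hfs, hc']

open PiTensorProduct

/-- If `V₁, …, V_ℓ` are irreducible self-dual finite-dimensional complex representations of a
finite group `G` and the product of their Frobenius–Schur indicators is `-1`, then the space of
`G`-invariants in `V₁ ⊗ V₂ ⊗ ⋯ ⊗ V_ℓ` is even-dimensional. -/
theorem even_finrank_invariants_of_prod_fsIndicator_eq_neg_one
    {ℓ : ℕ} {G : Type*} [Group G] [Fintype G]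
    (V : Fin ℓ → Type*) [∀ i, AddCommGroup (V i)] [∀ i, Module ℂ (V i)]
    [∀ i, FiniteDimensional ℂ (V i)]
    (ρ : ∀ i, Representation ℂ G (V i))
    (hirr : ∀ i, RepIsIrreducible (ρ i))
    (hsd : ∀ i, RepIsSelfDual (ρ i))
    (hν : ∏ i, fsIndicator G (ρ i) = -1) :
    Even (Module.finrank ℂ (piTensorRep ρ).invariants) := by
  classical
  choose e he using hsd
  have hsk : ∀ i (x y : V i), e i y x = fsIndicator G (ρ i) * e i x y :=
    fun i => fs_sign (ρ i) (hirr i) (e i) (he i)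
  have hinv : ∀ i (g : G) (x y : V i), e i (ρ i g x) (ρ i g y) = e i x y := by
    intro i g x y
    rw [he]
    show (e i x) (ρ i g⁻¹ (ρ i g y)) = e i x y
    rw [← Module.End.mul_apply, ← _root_.map_mul, inv_mul_cancel, _root_.map_one, Module.End.one_apply]
  set τ := piTensorRep ρ with hτdef
  have hτ : ∀ (g : G) (x : ∀ i, V i),
      τ g (tprod ℂ x) = tprod ℂ fun i => ρ i g (x i) := by
    intro g x
    show PiTensorProduct.map (fun i => ρ i g) (tprod ℂ x) = _
    rw [PiTensorProduct.map_tprod]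
  -- the pairing between the tensor product of duals and the dual of the tensor product
  set pair : (⨂[ℂ] i, Module.Dual ℂ (V i)) →ₗ[ℂ] Module.Dual ℂ (⨂[ℂ] i, V i) :=
    (LinearMap.llcomp ℂ (⨂[ℂ] i, V i) (⨂[ℂ] (_ : Fin ℓ), ℂ) ℂ
      (PiTensorProduct.constantBaseRingEquiv (Fin ℓ) ℂ).toLinearMap) ∘ₗ
      (PiTensorProduct.piTensorHomMap (R := ℂ) (s := V) (t := fun _ => ℂ)) with hpairdef
  have hpair : ∀ (f : ∀ i, Module.Dual ℂ (V i)) (x : ∀ i, V i),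
      pair (tprod ℂ f) (tprod ℂ x) = ∏ i, f i (x i) := by
    intro f x
    simp [hpairdef, LinearMap.llcomp_apply]
  set E := (PiTensorProduct.congr e).toLinearMap with hEdef
  set Bmap : (⨂[ℂ] i, V i) →ₗ[ℂ] Module.Dual ℂ (⨂[ℂ] i, V i) := pair ∘ₗ E with hBdef
  have hBtprod : ∀ x y : ∀ i, V i,
      Bmap (tprod ℂ x) (tprod ℂ y) = ∏ i, e i (x i) (y i) := by
    intro x y
    simp only [hBdef, LinearMap.comp_apply, hEdef, LinearEquiv.coe_coe,
      PiTensorProduct.congr_tprod, hpair]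
  -- extensionality helper for bilinear maps on the tensor product
  have ext2 : ∀ F F' : (⨂[ℂ] i, V i) →ₗ[ℂ] Module.Dual ℂ (⨂[ℂ] i, V i),
      (∀ x y : ∀ i, V i, F (tprod ℂ x) (tprod ℂ y) = F' (tprod ℂ x) (tprod ℂ y)) → F = F' := by
    intro F F' h
    refine PiTensorProduct.ext (MultilinearMap.ext fun x => ?_)
    show F (tprod ℂ x) = F' (tprod ℂ x)
    refine PiTensorProduct.ext (MultilinearMap.ext fun y => ?_)
    exact h x y
  -- invariance
  have hBinvp : ∀ (g : G) (z w : ⨂[ℂ] i, V i), Bmap (τ g z) (τ g w) = Bmap z w := by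
    intro g z w
    have hE : Bmap.compl₁₂ (τ g) (τ g) = Bmap := by
      refine ext2 _ _ fun x y => ?_
      rw [LinearMap.compl₁₂_apply, hτ, hτ, hBtprod, hBtprod]
      exact Finset.prod_congr rfl fun i _ => hinv i g (x i) (y i)
    have := congrArg (fun F => F z w) hE
    simpa [LinearMap.compl₁₂_apply] using this
  -- skew-symmetry
  have hBskew : ∀ z w : ⨂[ℂ] i, V i, Bmap z w = - Bmap w z := by
    intro z w
    have hE : Bmap = -Bmap.flip := by
      refine ext2 _ _ fun x y => ?_
      simp only [LinearMap.neg_apply, LinearMap.flip_apply, hBtprod]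
      have : ∀ i : Fin ℓ, e i (y i) (x i) = fsIndicator G (ρ i) * e i (x i) (y i) :=
        fun i => hsk i (x i) (y i)
      rw [show (∏ i, (e i (y i)) (x i)) = ∏ i, fsIndicator G (ρ i) * e i (x i) (y i) from
        Finset.prod_congr rfl fun i _ => this i, Finset.prod_mul_distrib, hν]
      ring
    conv_lhs => rw [hE]
    rfl
  -- injectivity of the form
  have hker : ∀ z : ⨂[ℂ] i, V i, Bmap z = 0 → z = 0 := by
    intro z hz
    set b : ∀ i, Module.Basis (Fin (Module.finrank ℂ (V i))) ℂ (V i) := fun i => Module.finBasis ℂ (V i)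
    set d : ∀ i, Module.Basis (Fin (Module.finrank ℂ (V i))) ℂ (Module.Dual ℂ (V i)) :=
      fun i => (b i).dualBasis
    have hzspan := span_basis_tprod d (E z)
    rw [Submodule.mem_span_range_iff_exists_fun] at hzspan
    obtain ⟨c, hc⟩ := hzspan
    have hδ : ∀ k m : ∀ i, Fin (Module.finrank ℂ (V i)),
        pair (tprod ℂ fun i => d i (k i)) (tprod ℂ fun i => b i (m i))
          = if m = k then 1 else 0 := by
      intro k m
      rw [hpair]
      by_cases h : m = k
      · subst h
        simp [d, Module.Basis.dualBasis_apply_self]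
      · obtain ⟨i, hi⟩ := Function.ne_iff.mp h
        rw [if_neg h]
        exact Finset.prod_eq_zero (Finset.mem_univ i)
          (by simp [d, Module.Basis.dualBasis_apply_self, hi])
    have hc0 : ∀ m, c m = 0 := by
      intro m
      have h1 : pair (E z) (tprod ℂ fun i => b i (m i)) = 0 := by
        have : pair (E z) = Bmap z := rfl
        rw [this, hz]
        rfl
      rw [← hc] at h1
      simp only [map_sum, LinearMap.smul_apply, map_smul, LinearMap.sum_apply] at h1
      rw [Finset.sum_congr rfl (fun k _ => by rw [hδ k m])] at h1
      simpa using h1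
    have hEz : E z = 0 := by
      rw [← hc]
      simp [hc0]
    have : E z = E 0 := by rw [hEz, map_zero]
    exact (PiTensorProduct.congr e).injective this
  -- finite-dimensionality
  have hfd : FiniteDimensional ℂ (⨂[ℂ] i, V i) := by
    constructor
    rw [Submodule.fg_def]
    refine ⟨Set.range fun k : ∀ i, Fin (Module.finrank ℂ (V i)) =>
      tprod ℂ fun i => Module.finBasis ℂ (V i) (k i), Set.finite_range _, ?_⟩
    exact eq_top_iff.mpr fun z _ => span_basis_tprod _ z
  -- the invariants
  set U := τ.invariants with hUdef
  have hcard : (Fintype.card G : ℂ) ≠ 0 := Nat.cast_ne_zero.mpr Fintype.card_ne_zero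
  have hPmem : ∀ w : ⨂[ℂ] i, V i, ((Fintype.card G : ℂ)⁻¹ • ∑ g : G, τ g w) ∈ U := by
    intro w
    rw [hUdef, Representation.mem_invariants]
    intro h
    rw [map_smul, map_sum]
    congr 1
    have : ∀ g : G, τ h (τ g w) = τ (h * g) w := by
      intro g; rw [_root_.map_mul, Module.End.mul_apply]
    simp only [this]
    exact Fintype.sum_bijective (fun g => h * g) (Group.mulLeft_bijective h)
      (fun g => τ (h * g) w) (fun g => τ g w) (fun g => rfl)
  have hBavg : ∀ u ∈ U, ∀ w : ⨂[ℂ] i, V i,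
      Bmap u ((Fintype.card G : ℂ)⁻¹ • ∑ g : G, τ g w) = Bmap u w := by
    intro u hu w
    rw [map_smul, map_sum]
    have : ∀ g : G, Bmap u (τ g w) = Bmap u w := by
      intro g
      have h1 := hBinvp g u w
      have hug : τ g u = u := hu g
      rwa [hug] at h1
    simp only [this, Finset.sum_const, Finset.card_univ]
    rw [← Nat.cast_smul_eq_nsmul ℂ, smul_smul, inv_mul_cancel₀ hcard, one_smul]
  -- the restricted form
  set BU : U →ₗ[ℂ] U →ₗ[ℂ] ℂ := (Bmap.domRestrict U).compl₂ U.subtype with hBUdef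
  have hBU : ∀ u w : U, BU u w = Bmap (u : ⨂[ℂ] i, V i) (w : ⨂[ℂ] i, V i) := fun u w => rfl
  have hskewU : ∀ u w : U, BU u w = - BU w u := fun u w => by
    rw [hBU, hBU, hBskew]
  have hndU : ∀ u : U, (∀ w : U, BU u w = 0) → u = 0 := by
    intro u hu
    have hall : ∀ w : ⨂[ℂ] i, V i, Bmap (u : ⨂[ℂ] i, V i) w = 0 := by
      intro w
      rw [← hBavg (u : ⨂[ℂ] i, V i) u.2 w]
      exact hu ⟨_, hPmem w⟩
    have : Bmap (u : ⨂[ℂ] i, V i) = 0 := LinearMap.ext hall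
    have := hker _ this
    exact Subtype.ext this
  exact even_finrank_of_skew BU hskewU hndU

end
end

section
/- Let G be a finite group and let χ₁, …, χ_ℓ be characters of irreducible finite-dimensional complex representations of G, each of which is self-dual, with Frobenius–Schur indicators ν_i := |G|⁻¹ ∑_{g∈G} χ_i(g²). If ∏_{i=1}^ℓ ν_i = −1, then the number |G|⁻¹ ∑_{g∈G} ∏_{i=1}^ℓ χ_i(g), which equals the dimension of the space of G-invariants in the tensor product of the corresponding representations, is an even (nonnegative) integer. -/
open scoped BigOperators

set_option linter.unusedSectionVars false
open Matrix LinearMap CategoryTheory Module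

variable {G : Type} [Group G] [Fintype G]

theorem schurlm (V : FDRep ℂ G) (hs : Simple V)
    (f : V →ₗ[ℂ] V) (hf : ∀ g : G, f ∘ₗ V.ρ g = V.ρ g ∘ₗ f) : ∃ c : ℂ, f = c • LinearMap.id := by
  haveI := hs
  obtain ⟨c, hc⟩ := CategoryTheory.endomorphism_simple_eq_smul_id (𝕜 := ℂ) (X := V)
      (⟨ObjectProperty.homMk (ModuleCat.ofHom f), fun g => FGModuleCat.hom_ext (hf g)⟩ : V ⟶ V)
  refine ⟨c, ?_⟩
  have h2 := congrArg (fun φ : V ⟶ V => φ.hom.hom.hom) hc.symm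
  exact h2

theorem simple_pos (V : FDRep ℂ G) (hs : Simple V) : 0 < finrank ℂ V := by
  haveI := hs
  rcases Nat.eq_zero_or_pos (finrank ℂ V) with h | h
  · have hsub : Subsingleton V := Module.finrank_zero_iff.mp h
    have : (𝟙 V : V ⟶ V) = 0 := by
      apply Action.hom_ext
      apply FGModuleCat.hom_ext
      apply LinearMap.ext
      intro v
      exact hsub.elim _ _
    exact absurd this (CategoryTheory.id_nonzero V)
  · exact h

theorem matSchur (V : FDRep ℂ G) (hs : Simple V) {n : ℕ} (b : Basis (Fin n) ℂ V)
    (C : Matrix (Fin n) (Fin n) ℂ)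
    (hC : ∀ g : G, C * LinearMap.toMatrix b b (V.ρ g) = LinearMap.toMatrix b b (V.ρ g) * C) :
    ∃ c : ℂ, C = c • 1 := by
  obtain ⟨c, hc⟩ := schurlm V hs (Matrix.toLin b b C) (fun g => by
    apply (LinearMap.toMatrix b b).injective
    simp only [LinearMap.toMatrix_comp b b b, LinearMap.toMatrix_toLin]
    exact hC g)
  refine ⟨c, ?_⟩
  have := congrArg (LinearMap.toMatrix b b) hc
  rwa [LinearMap.toMatrix_toLin, _root_.map_smul, LinearMap.toMatrix_id] at this

noncomputable def matRep (V : FDRep ℂ G) {n : ℕ} (b : Basis (Fin n) ℂ V) (g : G) :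
    Matrix (Fin n) (Fin n) ℂ := LinearMap.toMatrix b b (V.ρ g)

theorem matRep_mul (V : FDRep ℂ G) {n : ℕ} (b : Basis (Fin n) ℂ V) (g h : G) :
    matRep V b (g * h) = matRep V b g * matRep V b h := by
  unfold matRep
  rw [_root_.map_mul]
  exact LinearMap.toMatrix_mul b _ _

theorem matRep_one (V : FDRep ℂ G) {n : ℕ} (b : Basis (Fin n) ℂ V) :
    matRep V b 1 = 1 := by
  unfold matRep
  rw [_root_.map_one, LinearMap.toMatrix_one]

theorem matRep_inv (V : FDRep ℂ G) {n : ℕ} (b : Basis (Fin n) ℂ V) (g : G) :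
    matRep V b g * matRep V b g⁻¹ = 1 := by
  rw [← matRep_mul, mul_inv_cancel, matRep_one]

theorem matRep_trace (V : FDRep ℂ G) {n : ℕ} (b : Basis (Fin n) ℂ V) (g : G) :
    Matrix.trace (matRep V b g) = V.character g := by
  unfold matRep FDRep.character
  rw [LinearMap.trace_eq_matrix_trace ℂ b]

theorem dim_ne_zero (V : FDRep ℂ G) (hs : Simple V) {n : ℕ} (b : Basis (Fin n) ℂ V) :
    (n : ℂ) ≠ 0 := by
  have h1 : finrank ℂ V = n := by
    rw [finrank_eq_card_basis b, Fintype.card_fin]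
  have h2 := simple_pos V hs
  rw [h1] at h2
  exact Nat.cast_ne_zero.mpr (by omega)

theorem matAvg (V : FDRep ℂ G) (hs : Simple V) {n : ℕ} (b : Basis (Fin n) ℂ V)
    (C : Matrix (Fin n) (Fin n) ℂ) :
    (Fintype.card G : ℂ)⁻¹ • ∑ g : G, matRep V b g⁻¹ * C * matRep V b g
      = (Matrix.trace C / (n : ℂ)) • (1 : Matrix (Fin n) (Fin n) ℂ) := by
  set M := matRep V b with hM
  have hn : (n : ℂ) ≠ 0 := dim_ne_zero V hs b
  have hcard : (Fintype.card G : ℂ) ≠ 0 := Nat.cast_ne_zero.mpr Fintype.card_ne_zero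
  set T : Matrix (Fin n) (Fin n) ℂ := (Fintype.card G : ℂ)⁻¹ • ∑ g : G, M g⁻¹ * C * M g with hT
  have hcomm : ∀ h : G, T * M h = M h * T := by
    intro h
    rw [hT, Matrix.smul_mul, Matrix.mul_smul, Finset.sum_mul, Finset.mul_sum]
    congr 1
    refine Fintype.sum_equiv (Equiv.mulRight h) _ _ (fun g => ?_)
    simp only [Equiv.coe_mulRight]
    have h1 : M (g * h)⁻¹ = M h⁻¹ * M g⁻¹ := by
      rw [hM, (by group : (g * h)⁻¹ = h⁻¹ * g⁻¹), matRep_mul]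
    have h2 : M (g * h) = M g * M h := matRep_mul V b g h
    have h3 : M h * M h⁻¹ = 1 := matRep_inv V b h
    rw [h1, h2]
    simp only [← mul_assoc]
    rw [h3, one_mul]
  obtain ⟨c, hc⟩ := matSchur V hs b T (fun g => hcomm g)
  have htrT : Matrix.trace T = Matrix.trace C := by
    rw [hT, Matrix.trace_smul, Matrix.trace_sum]
    have key : ∀ g : G, Matrix.trace (M g⁻¹ * C * M g) = Matrix.trace C := by
      intro g
      rw [Matrix.trace_mul_comm, ← mul_assoc, matRep_inv V b g, one_mul]
    rw [Finset.sum_congr rfl (fun g _ => key g), Finset.sum_const, Finset.card_univ,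
      ← Nat.cast_smul_eq_nsmul ℂ, smul_smul, inv_mul_cancel₀ hcard, one_smul]
  have htrc : Matrix.trace T = c * n := by
    rw [hc, Matrix.trace_smul, Matrix.trace_one]
    simp
  have hcval : c = Matrix.trace C / (n : ℂ) := by
    rw [eq_div_iff hn]
    exact htrc.symm.trans htrT
  rw [hc, hcval]

theorem dualForm (V : FDRep ℂ G) {n : ℕ} (b : Basis (Fin n) ℂ V)
    (e : V ≅ FDRep.of (Representation.dual V.ρ)) :
    ∃ S S' : Matrix (Fin n) (Fin n) ℂ, S * S' = 1 ∧ S' * S = 1 ∧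
      ∀ g : G, (matRep V b g)ᵀ * S * matRep V b g = S := by
  let f : V →ₗ[ℂ] Module.Dual ℂ V := e.hom.hom.hom.hom
  let finv : Module.Dual ℂ V →ₗ[ℂ] V := e.inv.hom.hom.hom
  have hcomm : ∀ g : G, f ∘ₗ V.ρ g = Module.Dual.transpose (R := ℂ) (V.ρ g⁻¹) ∘ₗ f := by
    intro g
    exact congrArg (fun φ => φ.hom.hom) (e.hom.comm g)
  have hfo : f ∘ₗ finv = LinearMap.id := by
    exact congrArg (fun φ => φ.hom.hom.hom) e.inv_hom_id
  have hof : finv ∘ₗ f = LinearMap.id := by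
    exact congrArg (fun φ => φ.hom.hom.hom) e.hom_inv_id
  set S : Matrix (Fin n) (Fin n) ℂ := LinearMap.toMatrix b b.dualBasis f with hS
  set S' : Matrix (Fin n) (Fin n) ℂ := LinearMap.toMatrix b.dualBasis b finv with hS'
  have hmat : ∀ g : G, S * matRep V b g = (matRep V b g⁻¹)ᵀ * S := by
    intro g
    have h2 := congrArg (LinearMap.toMatrix b b.dualBasis) (hcomm g)
    rw [LinearMap.toMatrix_comp b b b.dualBasis, LinearMap.toMatrix_comp b b.dualBasis b.dualBasis,
      LinearMap.toMatrix_transpose] at h2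
    exact h2
  have hSS' : S * S' = 1 := by
    rw [hS, hS', ← LinearMap.toMatrix_comp b.dualBasis b b.dualBasis, hfo, LinearMap.toMatrix_id]
  have hS'S : S' * S = 1 := by
    rw [hS, hS', ← LinearMap.toMatrix_comp b b.dualBasis b, hof, LinearMap.toMatrix_id]
  refine ⟨S, S', hSS', hS'S, fun g => ?_⟩
  have h3 := (hmat g⁻¹).symm
  rw [inv_inv] at h3
  rw [h3, mul_assoc, ← matRep_mul, inv_mul_cancel, matRep_one, Matrix.mul_one]

theorem fsInd (V : FDRep ℂ G) (hs : Simple V) {n : ℕ} (b : Basis (Fin n) ℂ V)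
    (e : V ≅ FDRep.of (Representation.dual V.ρ)) :
    ∃ S S' : Matrix (Fin n) (Fin n) ℂ, S * S' = 1 ∧ S' * S = 1 ∧
      (∀ g : G, (matRep V b g)ᵀ * S * matRep V b g = S) ∧
      Sᵀ = ((Fintype.card G : ℂ)⁻¹ * ∑ g : G, V.character (g * g)) • S := by
  obtain ⟨S, S', hSS', hS'S, hinv⟩ := dualForm V b e
  set M := matRep V b with hM
  have hn : (n : ℂ) ≠ 0 := dim_ne_zero V hs b
  have hcard : (Fintype.card G : ℂ) ≠ 0 := Nat.cast_ne_zero.mpr Fintype.card_ne_zero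
  have h1 : ∀ g : G, (M g)ᵀ * S = S * M g⁻¹ := by
    intro g
    have h0 : (M g)ᵀ * S * (M g * M g⁻¹) = S * M g⁻¹ := by
      rw [← mul_assoc, hinv g]
    rwa [matRep_inv V b g, mul_one] at h0
  have hinvT : ∀ g : G, (M g)ᵀ * Sᵀ * M g = Sᵀ := by
    intro g
    have h0 := congrArg Matrix.transpose (hinv g)
    rw [Matrix.transpose_mul, Matrix.transpose_mul, Matrix.transpose_transpose] at h0
    rw [← mul_assoc] at h0
    exact h0
  have h1t : ∀ g : G, (M g)ᵀ * Sᵀ = Sᵀ * M g⁻¹ := by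
    intro g
    have h0 : (M g)ᵀ * Sᵀ * (M g * M g⁻¹) = Sᵀ * M g⁻¹ := by
      rw [← mul_assoc, hinvT g]
    rwa [matRep_inv V b g, mul_one] at h0
  have h2 : ∀ g : G, S' * (M g)ᵀ = M g⁻¹ * S' := by
    intro g
    calc S' * (M g)ᵀ = S' * ((M g)ᵀ * (S * S')) := by rw [hSS', mul_one]
      _ = S' * (((M g)ᵀ * S) * S') := by rw [mul_assoc]
      _ = S' * ((S * M g⁻¹) * S') := by rw [h1 g]
      _ = (S' * S) * (M g⁻¹ * S') := by simp only [mul_assoc]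
      _ = M g⁻¹ * S' := by rw [hS'S, one_mul]
  set C : Matrix (Fin n) (Fin n) ℂ := S' * Sᵀ with hC
  have hCcomm : ∀ g : G, C * M g = M g * C := by
    intro h
    have e1 : Sᵀ * M h = (M h⁻¹)ᵀ * Sᵀ := by
      have h5 := h1t h⁻¹
      rw [inv_inv] at h5
      exact h5.symm
    have e2 : S' * (M h⁻¹)ᵀ = M h * S' := by
      have := h2 h⁻¹
      rwa [inv_inv] at this
    calc C * M h = S' * (Sᵀ * M h) := by rw [hC, mul_assoc]
      _ = S' * ((M h⁻¹)ᵀ * Sᵀ) := by rw [e1]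
      _ = (S' * (M h⁻¹)ᵀ) * Sᵀ := by rw [mul_assoc]
      _ = (M h * S') * Sᵀ := by rw [e2]
      _ = M h * C := by rw [hC, mul_assoc]
  obtain ⟨c, hc⟩ := matSchur V hs b C (fun g => hCcomm g)
  have hSt : Sᵀ = c • S := by
    calc Sᵀ = (S * S') * Sᵀ := by rw [hSS', one_mul]
      _ = S * C := by rw [mul_assoc, hC]
      _ = c • S := by rw [hc, Matrix.mul_smul, Matrix.mul_one]
  -- now compute the indicator
  have hMgT : ∀ g : G, (M g)ᵀ = S * M g⁻¹ * S' := by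
    intro g
    calc (M g)ᵀ = ((M g)ᵀ * S) * S' := by rw [mul_assoc, hSS', mul_one]
      _ = (S * M g⁻¹) * S' := by rw [h1 g]
  have hKey : ∀ a b' : Fin n,
      (Fintype.card G : ℂ)⁻¹ * ∑ g : G, M g a b' * M g b' a = (S' b' a / (n : ℂ)) * S b' a := by
    intro a b'
    have hPsi : (Fintype.card G : ℂ)⁻¹ • ∑ g : G, (M g)ᵀ * Matrix.single a b' (1:ℂ) * M g
        = (Matrix.trace (S' * Matrix.single a b' (1:ℂ)) / (n : ℂ)) • S := by
      calc (Fintype.card G : ℂ)⁻¹ • ∑ g : G, (M g)ᵀ * Matrix.single a b' (1:ℂ) * M g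
          = (Fintype.card G : ℂ)⁻¹ • ∑ g : G,
              S * (M g⁻¹ * (S' * Matrix.single a b' (1:ℂ)) * M g) := by
            congr 1
            refine Finset.sum_congr rfl (fun g _ => ?_)
            rw [hMgT g]
            simp only [mul_assoc]
        _ = S * ((Fintype.card G : ℂ)⁻¹ • ∑ g : G,
              M g⁻¹ * (S' * Matrix.single a b' (1:ℂ)) * M g) := by
            rw [Matrix.mul_smul, Finset.mul_sum]
        _ = S * ((Matrix.trace (S' * Matrix.single a b' (1:ℂ)) / (n : ℂ)) • 1) := by
            rw [matAvg V hs b]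
        _ = (Matrix.trace (S' * Matrix.single a b' (1:ℂ)) / (n : ℂ)) • S := by
            rw [Matrix.mul_smul, Matrix.mul_one]
    have htrE : Matrix.trace (S' * Matrix.single a b' (1:ℂ)) = S' b' a := by
      simp [Matrix.trace, Matrix.diag, Matrix.mul_apply, Matrix.single, ite_and]
    have hent : ((Fintype.card G : ℂ)⁻¹ • ∑ g : G, (M g)ᵀ * Matrix.single a b' (1:ℂ) * M g) b' a
        = ((Matrix.trace (S' * Matrix.single a b' (1:ℂ)) / (n : ℂ)) • S) b' a := by
      rw [hPsi]
    rw [htrE] at hent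
    simp only [Matrix.smul_apply, Matrix.sum_apply, smul_eq_mul] at hent
    have hterm : ∀ g : G, ((M g)ᵀ * Matrix.single a b' (1:ℂ) * M g) b' a
        = M g a b' * M g b' a := by
      intro g
      simp [Matrix.mul_apply, Matrix.single, ite_and]
    simp only [hterm] at hent
    exact hent
  -- assemble the indicator value
  have hSba : ∀ a b' : Fin n, S b' a = c * S a b' := by
    intro a b'
    have : Sᵀ a b' = (c • S) a b' := by rw [hSt]
    simpa using this
  have hnu : (Fintype.card G : ℂ)⁻¹ * ∑ g : G, V.character (g * g) = c := by
    have hch : ∀ g : G, V.character (g * g) = ∑ a : Fin n, ∑ b' : Fin n, M g a b' * M g b' a := by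
      intro g
      rw [← matRep_trace V b, matRep_mul]
      simp [Matrix.trace, Matrix.diag, Matrix.mul_apply, hM]
    calc (Fintype.card G : ℂ)⁻¹ * ∑ g : G, V.character (g * g)
        = ∑ a : Fin n, ∑ b' : Fin n, ((Fintype.card G : ℂ)⁻¹ * ∑ g : G, M g a b' * M g b' a) := by
          simp only [hch]
          rw [Finset.sum_comm]
          rw [show (∑ a : Fin n, ∑ g : G, ∑ b' : Fin n, M g a b' * M g b' a)
              = ∑ a : Fin n, ∑ b' : Fin n, ∑ g : G, M g a b' * M g b' a from
            Finset.sum_congr rfl fun a _ => Finset.sum_comm]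
          rw [Finset.mul_sum]
          exact Finset.sum_congr rfl fun a _ => Finset.mul_sum _ _ _
      _ = ∑ a : Fin n, ∑ b' : Fin n, (S' b' a / (n : ℂ)) * S b' a := by
          simp only [hKey]
      _ = (c / (n : ℂ)) * ∑ a : Fin n, ∑ b' : Fin n, S a b' * S' b' a := by
          rw [Finset.mul_sum]
          refine Finset.sum_congr rfl (fun a _ => ?_)
          rw [Finset.mul_sum]
          refine Finset.sum_congr rfl (fun b' _ => ?_)
          rw [hSba a b']
          ring
      _ = (c / (n : ℂ)) * ∑ a : Fin n, (S * S') a a := by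
          rw [Finset.mul_sum, Finset.mul_sum]
          refine Finset.sum_congr rfl (fun a _ => ?_)
          rw [Matrix.mul_apply]
      _ = c := by
          rw [hSS']
          simp [Matrix.one_apply]
          field_simp
  exact ⟨S, S', hSS', hS'S, hinv, by rw [hnu]; exact hSt⟩

theorem trace_proj_even {ι : Type} [Fintype ι] [DecidableEq ι]
    (P S S' : Matrix ι ι ℂ) (hP : P * P = P) (hSS' : S * S' = 1)
    (hskew : Sᵀ = -S) (hPS : Pᵀ * S = S * P) :
    ∃ m : ℕ, Even m ∧ Matrix.trace P = m := by
  classical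
  set p : (ι → ℂ) →ₗ[ℂ] (ι → ℂ) := Matrix.toLin' P with hp
  have hpp : ∀ x, p (p x) = p x := by
    intro x
    rw [hp, ← Matrix.toLin'_mul_apply, hP]
  set U : Submodule ℂ (ι → ℂ) := LinearMap.range p with hU
  have hproj : LinearMap.IsProj U p := by
    refine ⟨fun x => LinearMap.mem_range_self p x, ?_⟩
    rintro x ⟨y, rfl⟩
    exact hpp y
  have htr : Matrix.trace P = (finrank ℂ U : ℂ) := by
    rw [← hproj.trace]
    rw [LinearMap.trace_eq_matrix_trace ℂ (Pi.basisFun ℂ ι), hp]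
    rw [LinearMap.toMatrix_eq_toMatrix', LinearMap.toMatrix'_toLin']
  -- the bilinear form
  set F : (ι → ℂ) → (ι → ℂ) → ℂ := fun u w => u ⬝ᵥ (S *ᵥ w) with hF
  have hFswap : ∀ u w, F (P *ᵥ u) w = F u (P *ᵥ w) := by
    intro u w
    show (P *ᵥ u) ⬝ᵥ (S *ᵥ w) = u ⬝ᵥ (S *ᵥ (P *ᵥ w))
    conv_rhs => rw [Matrix.mulVec_mulVec, ← hPS, ← Matrix.mulVec_mulVec,
      Matrix.mulVec_transpose]
    conv_lhs => rw [dotProduct_comm, Matrix.dotProduct_mulVec, dotProduct_comm]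
  have hFskew : ∀ x y : ι → ℂ, F x y = - F y x := by
    intro x y
    show x ⬝ᵥ (S *ᵥ y) = - (y ⬝ᵥ (S *ᵥ x))
    conv_lhs => rw [show S = -Sᵀ by rw [hskew, neg_neg], Matrix.neg_mulVec,
      dotProduct_neg, Matrix.mulVec_transpose, dotProduct_comm,
      ← Matrix.dotProduct_mulVec]
  have hfix : ∀ u ∈ U, P *ᵥ u = u := by
    rintro u ⟨y, rfl⟩
    have h5 : p (p y) = p y := hpp y
    simpa [hp, Matrix.toLin'_apply] using h5
  have hmemP : ∀ v : ι → ℂ, P *ᵥ v ∈ U := by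
    intro v
    exact ⟨v, by simp [hp, Matrix.toLin'_apply]⟩
  have hnondeg : ∀ u ∈ U, (∀ w ∈ U, F u w = 0) → u = 0 := by
    intro u hu h0
    have hall : ∀ v : ι → ℂ, F u v = 0 := by
      intro v
      have h6 : F u v = F u (P *ᵥ v) := by
        conv_lhs => rw [← hfix u hu]
        rw [hFswap]
      rw [h6]
      exact h0 _ (hmemP v)
    have hvm : u ᵥ* S = 0 := by
      funext j
      have h7 := hall (Pi.single j 1)
      rw [hF] at h7
      simp only at h7
      rw [Matrix.dotProduct_mulVec, dotProduct_single] at h7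
      simpa using h7
    calc u = u ᵥ* (S * S') := by rw [hSS', Matrix.vecMul_one]
      _ = (u ᵥ* S) ᵥ* S' := by rw [Matrix.vecMul_vecMul]
      _ = 0 := by rw [hvm, Matrix.zero_vecMul]
  -- matrix of the form on U
  set d : ℕ := finrank ℂ U with hd
  set bb : Basis (Fin d) ℂ U := finBasis ℂ U with hbb
  set A : Matrix (Fin d) (Fin d) ℂ := Matrix.of (fun k l => F (bb k) (bb l)) with hA
  have hAskew : Aᵀ = -A := by
    ext k l
    simp only [Matrix.transpose_apply, Matrix.neg_apply, hA, Matrix.of_apply]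
    exact hFskew _ _
  have hAdet : A.det ≠ 0 := by
    intro hdet
    obtain ⟨v, hvne, hv⟩ := Matrix.exists_vecMul_eq_zero_iff.mpr hdet
    apply hvne
    set uu : U := bb.equivFun.symm v with huudef
    have huu : (uu : ι → ℂ) = ∑ k, v k • (bb k : ι → ℂ) := by
      rw [huudef, Basis.equivFun_symm_apply]
      simp
    have hpair : ∀ l : Fin d, F (uu : ι → ℂ) (bb l) = 0 := by
      intro l
      have hcomp : ∑ k, v k * A k l = 0 := by
        have h8 := congrFun hv l
        simpa [Matrix.vecMul, dotProduct] using h8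
      have hsumL : ∀ (f : Fin d → ι → ℂ) (y : ι → ℂ), (∑ k, f k) ⬝ᵥ y = ∑ k, f k ⬝ᵥ y := by
        intro f y
        simp only [dotProduct, Finset.sum_apply, Finset.sum_mul]
        exact Finset.sum_comm
      calc F (uu : ι → ℂ) (bb l) = ∑ k, v k * F (bb k) (bb l) := by
            rw [huu]
            show (∑ k, v k • (bb k : ι → ℂ)) ⬝ᵥ (S *ᵥ (bb l : ι → ℂ)) = _
            rw [hsumL]
            refine Finset.sum_congr rfl fun k _ => ?_
            rw [smul_dotProduct, smul_eq_mul]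
        _ = 0 := hcomp
    -- linear functional x ⬝ᵥ ·
    set x : ι → ℂ := (uu : ι → ℂ) ᵥ* S with hx
    have hFx : ∀ w : ι → ℂ, F (uu : ι → ℂ) w = x ⬝ᵥ w := by
      intro w
      show (uu : ι → ℂ) ⬝ᵥ (S *ᵥ w) = x ⬝ᵥ w
      rw [Matrix.dotProduct_mulVec, hx]
    have hsumR : ∀ (f : Fin d → ι → ℂ) (y : ι → ℂ), y ⬝ᵥ (∑ k, f k) = ∑ k, y ⬝ᵥ f k := by
      intro f y
      simp only [dotProduct, Finset.sum_apply, Finset.mul_sum]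
      exact Finset.sum_comm
    have hallU : ∀ w ∈ U, F (uu : ι → ℂ) w = 0 := by
      intro w hw
      rw [hFx]
      have hw' : ((⟨w, hw⟩ : U) : ι → ℂ) = w := rfl
      rw [← hw', ← bb.sum_repr ⟨w, hw⟩]
      push_cast
      rw [hsumR]
      refine Finset.sum_eq_zero fun l _ => ?_
      rw [dotProduct_smul]
      have h9 := hpair l
      rw [hFx] at h9
      rw [h9, smul_zero]
    have huz : (uu : ι → ℂ) = 0 := hnondeg _ uu.2 hallU
    have huz' : uu = 0 := Subtype.ext huz
    have hveq : v = bb.equivFun uu := by rw [huudef, LinearEquiv.apply_symm_apply]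
    rw [hveq, huz']
    exact bb.equivFun.map_zero
  have hdeven : Even d := by
    have h1 : A.det = (-1 : ℂ) ^ d * A.det := by
      conv_lhs => rw [← Matrix.det_transpose, hAskew, ← neg_one_smul ℂ A,
        Matrix.det_smul, Fintype.card_fin]
    have h2 : (-1 : ℂ) ^ d * A.det = 1 * A.det := by rw [← h1, one_mul]
    have h3 := mul_right_cancel₀ hAdet h2
    exact (neg_one_pow_eq_one_iff_even (by norm_num : (-1 : ℂ) ≠ 1)).mp h3
  exact ⟨d, hdeven, htr⟩

noncomputable def kron {ℓ : ℕ} (n : Fin ℓ → ℕ) (A : ∀ i, Matrix (Fin (n i)) (Fin (n i)) ℂ) :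
    Matrix (∀ i, Fin (n i)) (∀ i, Fin (n i)) ℂ :=
  Matrix.of fun x y => ∏ i, A i (x i) (y i)

theorem kron_mul {ℓ : ℕ} (n : Fin ℓ → ℕ) (A B : ∀ i, Matrix (Fin (n i)) (Fin (n i)) ℂ) :
    kron n A * kron n B = kron n (fun i => A i * B i) := by
  ext x y
  rw [Matrix.mul_apply]
  show ∑ z : ∀ i, Fin (n i), (∏ i, A i (x i) (z i)) * ∏ i, B i (z i) (y i)
      = ∏ i, (A i * B i) (x i) (y i)
  simp only [Matrix.mul_apply]
  rw [Fintype.prod_sum (fun i (j : Fin (n i)) => A i (x i) j * B i j (y i))]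
  exact Finset.sum_congr rfl fun z _ => Finset.prod_mul_distrib.symm

theorem kron_transpose {ℓ : ℕ} (n : Fin ℓ → ℕ) (A : ∀ i, Matrix (Fin (n i)) (Fin (n i)) ℂ) :
    (kron n A)ᵀ = kron n (fun i => (A i)ᵀ) := by
  ext x y
  rfl

theorem kron_one {ℓ : ℕ} (n : Fin ℓ → ℕ) :
    kron n (fun _ => (1 : Matrix _ _ ℂ)) = 1 := by
  ext x y
  show (∏ i, (1 : Matrix (Fin (n i)) (Fin (n i)) ℂ) (x i) (y i)) = (1 : Matrix _ _ ℂ) x y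
  by_cases h : x = y
  · subst h
    simp [Matrix.one_apply]
  · rw [Matrix.one_apply_ne h]
    obtain ⟨i, hi⟩ := Function.ne_iff.mp h
    exact Finset.prod_eq_zero (Finset.mem_univ i) (Matrix.one_apply_ne hi)

theorem kron_trace {ℓ : ℕ} (n : Fin ℓ → ℕ) (A : ∀ i, Matrix (Fin (n i)) (Fin (n i)) ℂ) :
    Matrix.trace (kron n A) = ∏ i, Matrix.trace (A i) := by
  simp only [Matrix.trace, Matrix.diag, kron, Matrix.of_apply]
  exact (Fintype.prod_sum (fun i (j : Fin (n i)) => A i j j)).symm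

theorem kron_smul {ℓ : ℕ} (n : Fin ℓ → ℕ) (c : Fin ℓ → ℂ)
    (A : ∀ i, Matrix (Fin (n i)) (Fin (n i)) ℂ) :
    kron n (fun i => c i • A i) = (∏ i, c i) • kron n A := by
  ext x y
  show ∏ i, (c i • A i) (x i) (y i) = (∏ i, c i) • kron n A x y
  simp only [Matrix.smul_apply, smul_eq_mul, kron, Matrix.of_apply]
  rw [Finset.prod_mul_distrib]

/-- If `χ₁, …, χ_ℓ` are characters of irreducible self-dual finite-dimensional complex
representations of a finite group `G` and the product of their Frobenius–Schur indicators
`ν_i = |G|⁻¹ ∑_g χ_i(g²)` equals `-1`, then `|G|⁻¹ ∑_g ∏_i χ_i(g)` is an even nonnegative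
integer. -/
theorem even_of_prod_fsIndicator_eq_neg_one
    {ℓ : ℕ} {G : Type} [Group G] [Fintype G]
    (χ : Fin ℓ → G → ℂ)
    (h : ∀ i, ∃ V : FDRep ℂ G,
      CategoryTheory.Simple V ∧ Nonempty (V ≅ FDRep.of (Representation.dual V.ρ)) ∧ χ i = V.character)
    (hν : ∏ i, ((Fintype.card G : ℂ)⁻¹ * ∑ g : G, χ i (g * g)) = -1) :
    ∃ n : ℕ, Even n ∧ (Fintype.card G : ℂ)⁻¹ * ∑ g : G, ∏ i, χ i g = n := by
  classical
  choose V hsimp hdual hchar using h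
  set nn : Fin ℓ → ℕ := fun i => finrank ℂ (V i) with hnn
  set bs : ∀ i, Basis (Fin (nn i)) ℂ (V i) := fun i => finBasis ℂ (V i) with hbs
  choose S S' hSS' hS'S hinvar htransp using
    fun i => fsInd (V i) (hsimp i) (bs i) (hdual i).some
  set M : (i : Fin ℓ) → G → Matrix (Fin (nn i)) (Fin (nn i)) ℂ :=
    fun i => matRep (V i) (bs i) with hMdef
  have hprod : (∏ i, ((Fintype.card G : ℂ)⁻¹ * ∑ g : G, (V i).character (g * g))) = -1 := by
    rw [← hν]
    exact Finset.prod_congr rfl fun i _ => by rw [hchar i]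
  set bigM : G → Matrix (∀ i, Fin (nn i)) (∀ i, Fin (nn i)) ℂ :=
    fun g => kron nn (fun i => M i g) with hbigM
  have hbigM_mul : ∀ g g' : G, bigM g * bigM g' = bigM (g * g') := by
    intro g g'
    show kron nn (fun i => M i g) * kron nn (fun i => M i g') = kron nn (fun i => M i (g * g'))
    rw [kron_mul]
    exact congrArg (kron nn) (funext fun j => (matRep_mul (V j) (bs j) g g').symm)
  have hbigM_invmul : ∀ g : G, bigM g * bigM g⁻¹ = 1 := by
    intro g
    rw [hbigM_mul, mul_inv_cancel]
    show kron nn (fun i => M i 1) = 1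
    rw [show (fun i => M i 1) = (fun i => (1 : Matrix (Fin (nn i)) (Fin (nn i)) ℂ)) from
      funext fun j => matRep_one (V j) (bs j)]
    exact kron_one nn
  set Sb : Matrix (∀ i, Fin (nn i)) (∀ i, Fin (nn i)) ℂ := kron nn S with hSb
  set Sb' : Matrix (∀ i, Fin (nn i)) (∀ i, Fin (nn i)) ℂ := kron nn S' with hSb'
  have hSbSb' : Sb * Sb' = 1 := by
    show kron nn S * kron nn S' = 1
    rw [kron_mul]
    rw [show (fun i => S i * S' i) = fun i => (1 : Matrix (Fin (nn i)) (Fin (nn i)) ℂ) from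
      funext fun i => hSS' i]
    exact kron_one nn
  have hskewb : Sbᵀ = -Sb := by
    show (kron nn S)ᵀ = -(kron nn S)
    rw [kron_transpose]
    rw [show (fun i => (S i)ᵀ)
        = fun i => ((Fintype.card G : ℂ)⁻¹ * ∑ g : G, (V i).character (g * g)) • S i from
      funext fun i => htransp i]
    rw [kron_smul, hprod, neg_one_smul]
  have hinvb : ∀ g : G, (bigM g)ᵀ * Sb * bigM g = Sb := by
    intro g
    show (kron nn (fun i => M i g))ᵀ * kron nn S * kron nn (fun i => M i g) = kron nn S
    rw [kron_transpose, kron_mul, kron_mul]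
    exact congrArg (kron nn) (funext fun j => hinvar j g)
  set P : Matrix (∀ i, Fin (nn i)) (∀ i, Fin (nn i)) ℂ :=
    (Fintype.card G : ℂ)⁻¹ • ∑ g : G, bigM g with hP
  have hcard : (Fintype.card G : ℂ) ≠ 0 := Nat.cast_ne_zero.mpr Fintype.card_ne_zero
  have hPmul : ∀ g' : G, P * bigM g' = P := by
    intro g'
    rw [hP, Matrix.smul_mul, Finset.sum_mul]
    congr 1
    refine Fintype.sum_equiv (Equiv.mulRight g') _ _ fun g => ?_
    rw [hbigM_mul]
    rfl
  have hPP : P * P = P := by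
    have hstep : P * ((Fintype.card G : ℂ)⁻¹ • ∑ g : G, bigM g) = P := by
      rw [Matrix.mul_smul, Finset.mul_sum]
      rw [show ∑ g' : G, P * bigM g' = ∑ _g' : G, P from
        Finset.sum_congr rfl fun g' _ => hPmul g']
      rw [Finset.sum_const, Finset.card_univ, ← Nat.cast_smul_eq_nsmul ℂ, smul_smul,
        inv_mul_cancel₀ hcard, one_smul]
    exact hstep
  have hPS : Pᵀ * Sb = Sb * P := by
    rw [hP, Matrix.transpose_smul, Matrix.transpose_sum, Matrix.smul_mul, Matrix.mul_smul,
      Finset.sum_mul, Finset.mul_sum]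
    congr 1
    refine Fintype.sum_equiv (Equiv.inv G) _ _ fun g => ?_
    simp only [Equiv.inv_apply]
    have h0 : (bigM g)ᵀ * Sb * (bigM g * bigM g⁻¹) = Sb * bigM g⁻¹ := by
      rw [← mul_assoc, hinvb g]
    rwa [hbigM_invmul g, mul_one] at h0
  obtain ⟨m, hme, hmt⟩ := trace_proj_even P Sb Sb' hPP hSbSb' hskewb hPS
  refine ⟨m, hme, ?_⟩
  rw [← hmt, hP, Matrix.trace_smul, Matrix.trace_sum, smul_eq_mul]
  congr 1
  refine Finset.sum_congr rfl fun g _ => ?_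
  rw [show bigM g = kron nn (fun i => M i g) from rfl, kron_trace]
  refine Finset.prod_congr rfl fun i _ => ?_
  rw [hchar i]
  exact (matRep_trace (V i) (bs i) g).symm
end

section
/- Let G be a finite group and let V₁, …, V_ℓ be irreducible finite-dimensional complex representations of G, each of which is self-dual, with Frobenius–Schur indicators ν_i := |G|⁻¹ ∑_{g∈G} χ_{V_i}(g²) ∈ {+1, −1}. Then the space of G-invariants H := (V₁ ⊗ V₂ ⊗ ⋯ ⊗ V_ℓ)^G carries a non-degenerate bilinear form which is symmetric if ∏_{i=1}^ℓ ν_i = +1 and antisymmetric (alternating) if ∏_{i=1}^ℓ ν_i = −1. -/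
open scoped TensorProduct

noncomputable section

section Aux

open scoped Matrix

set_option linter.unusedSectionVars false
set_option maxHeartbeats 1000000

variable {G : Type*} [Group G] [Fintype G]
variable {W : Type*} [AddCommGroup W] [Module ℂ W] [FiniteDimensional ℂ W]

theorem schur_scalar_s2 (ρ : Representation ℂ G W)
    (hirr : RepIsIrreducible ρ)
    (f : W →ₗ[ℂ] W) (hf : ∀ (g : G) (x : W), f (ρ g x) = ρ g (f x)) :
    ∃ μ : ℂ, ∀ x, f x = μ • x := by
  have : Nontrivial W := hirr.1
  obtain ⟨μ, hμ⟩ := Module.End.exists_eigenvalue f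
  refine ⟨μ, fun x => ?_⟩
  have hst : ∀ g : G, ∀ y ∈ Module.End.eigenspace f μ, ρ g y ∈ Module.End.eigenspace f μ := by
    intro g y hy
    rw [Module.End.mem_eigenspace_iff] at hy ⊢
    rw [hf, hy, map_smul]
  rcases hirr.2 _ hst with h | h
  · exact absurd h hμ
  · have : x ∈ Module.End.eigenspace f μ := h ▸ Submodule.mem_top
    rwa [Module.End.mem_eigenspace_iff] at this

theorem pairing_inv (ρ : Representation ℂ G W) (e : W ≃ₗ[ℂ] Module.Dual ℂ W)
    (he : ∀ (g : G) (v : W), e (ρ g v) = ρ.dual g (e v)) (g : G) (v w : W) :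
    e (ρ g v) (ρ g w) = e v w := by
  rw [he, Representation.dual_apply]
  simp only [Module.Dual.transpose_apply, LinearMap.comp_apply]
  rw [← Module.End.mul_apply, ← map_mul, inv_mul_cancel, map_one, Module.End.one_apply]

theorem flip_sign (ρ : Representation ℂ G W)
    (hirr : RepIsIrreducible ρ)
    (e : W ≃ₗ[ℂ] Module.Dual ℂ W)
    (he : ∀ (g : G) (v : W), e (ρ g v) = ρ.dual g (e v)) :
    ∃ c : ℂ, c ≠ 0 ∧ ∀ v w : W, e w v = c * e v w := by
  have : Nontrivial W := hirr.1
  set e' : W →ₗ[ℂ] Module.Dual ℂ W := LinearMap.flip (e.toLinearMap) with he'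
  have he'app : ∀ v w : W, e' v w = e w v := fun v w => rfl
  have hes : ∀ (g : G) (φ : Module.Dual ℂ W), e.symm (ρ.dual g φ) = ρ g (e.symm φ) := by
    intro g φ
    apply e.injective
    rw [he, e.apply_symm_apply, e.apply_symm_apply]
  have he'equiv : ∀ (g : G) (v : W), e' (ρ g v) = ρ.dual g (e' v) := by
    intro g v
    ext w
    have h1 : e' (ρ g v) w = e w (ρ g v) := rfl
    have h2 : (ρ.dual g (e' v)) w = e' v (ρ g⁻¹ w) := by
      rw [Representation.dual_apply]; rfl
    rw [h1, h2, he'app]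
    have := pairing_inv ρ e he g (ρ g⁻¹ w) v
    rw [← Module.End.mul_apply, ← map_mul, mul_inv_cancel, map_one, Module.End.one_apply] at this
    exact this
  set f : W →ₗ[ℂ] W := e.symm.toLinearMap ∘ₗ e' with hfdef
  have hfequiv : ∀ (g : G) (x : W), f (ρ g x) = ρ g (f x) := by
    intro g x
    show e.symm (e' (ρ g x)) = ρ g (e.symm (e' x))
    rw [he'equiv, hes]
  obtain ⟨c, hc⟩ := schur_scalar_s2 ρ hirr f hfequiv
  have hflip : ∀ v w : W, e w v = c * e v w := by
    intro v w
    have h0 : e.symm (e' v) = c • v := hc v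
    have h1 : e' v = e (c • v) := by rw [← h0, e.apply_symm_apply]
    have := congrFun (congrArg (fun φ : Module.Dual ℂ W => (φ : W → ℂ)) h1) w
    simpa [he'app, smul_eq_mul] using this
  refine ⟨c, ?_, hflip⟩
  obtain ⟨v, hv⟩ := exists_ne (0 : W)
  have hev : e v ≠ 0 := fun h => hv (by simpa using e.map_eq_zero_iff.mp h)
  obtain ⟨w, hw⟩ : ∃ w, e v w ≠ 0 := by
    by_contra h
    push_neg at h
    exact hev (LinearMap.ext fun w => h w)
  intro hc0
  have := hflip w v
  rw [hc0, zero_mul] at this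
  exact hw this

theorem schur_average (ρ : Representation ℂ G W)
    (hirr : RepIsIrreducible ρ)
    (b : Module.Basis (Fin (Module.finrank ℂ W)) ℂ W)
    (X : Matrix (Fin (Module.finrank ℂ W)) (Fin (Module.finrank ℂ W)) ℂ) :
    ∑ g : G, LinearMap.toMatrix b b (ρ g) * X * LinearMap.toMatrix b b (ρ g⁻¹)
      = (((Fintype.card G : ℂ) * X.trace) / (Module.finrank ℂ W : ℂ)) • 1 := by
  have : Nontrivial W := hirr.1
  set Y : W →ₗ[ℂ] W := Matrix.toLin b b X with hY
  set F : W →ₗ[ℂ] W := ∑ g : G, ρ g ∘ₗ Y ∘ₗ ρ g⁻¹ with hF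
  have hid : ∀ g : G, (ρ g⁻¹) ∘ₗ (ρ g) = LinearMap.id := by
    intro g
    have : ρ g⁻¹ * ρ g = 1 := by rw [← map_mul, inv_mul_cancel, map_one]
    exact this
  have hcancel : ∀ (g : G) (x : W), ρ g⁻¹ (ρ g x) = x := by
    intro g x
    rw [← LinearMap.comp_apply, hid, LinearMap.id_apply]
  have hcancel' : ∀ (g : G) (x : W), ρ g (ρ g⁻¹ x) = x := by
    intro g x
    simpa using hcancel g⁻¹ x
  have hFeq : ∀ (h : G) (x : W), F (ρ h x) = ρ h (F x) := by
    intro h x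
    have : F (ρ h x) = ∑ g : G, ρ g (Y (ρ g⁻¹ (ρ h x))) := by
      rw [hF, LinearMap.sum_apply]
      simp [LinearMap.comp_apply]
    rw [this]
    have : ρ h (F x) = ∑ g : G, ρ h (ρ g (Y (ρ g⁻¹ x))) := by
      rw [hF, LinearMap.sum_apply, map_sum]
      simp [LinearMap.comp_apply]
    rw [this]
    apply Fintype.sum_equiv (Equiv.mulLeft h⁻¹)
    intro g
    simp only [Equiv.coe_mulLeft]
    rw [map_mul, mul_inv_rev, inv_inv, map_mul]
    simp only [Module.End.mul_apply, hcancel, hcancel']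
  obtain ⟨μ, hμ⟩ := schur_scalar_s2 ρ hirr F hFeq
  have hFid : F = μ • LinearMap.id := by
    ext x; simp [hμ x]
  have htrF : LinearMap.trace ℂ W F = (Fintype.card G : ℂ) * LinearMap.trace ℂ W Y := by
    rw [hF, map_sum]
    have : ∀ g : G, LinearMap.trace ℂ W (ρ g ∘ₗ Y ∘ₗ ρ g⁻¹) = LinearMap.trace ℂ W Y := by
      intro g
      rw [LinearMap.trace_comp_comm', LinearMap.comp_assoc, hid, LinearMap.comp_id]
    simp [this, Finset.card_univ]
  have htrμ : LinearMap.trace ℂ W (μ • (LinearMap.id : W →ₗ[ℂ] W)) = μ * (Module.finrank ℂ W : ℂ) := by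
    rw [map_smul, LinearMap.trace_id]
    simp [smul_eq_mul]
  have hne : ((Module.finrank ℂ W : ℕ) : ℂ) ≠ 0 := by
    have : 0 < Module.finrank ℂ W := Module.finrank_pos
    exact_mod_cast Nat.cast_ne_zero.mpr this.ne'
  have htrY : LinearMap.trace ℂ W Y = X.trace := by
    rw [LinearMap.trace_eq_matrix_trace ℂ b, LinearMap.toMatrix_toLin]
  have hμval : μ = ((Fintype.card G : ℂ) * X.trace) / (Module.finrank ℂ W : ℂ) := by
    have h1 : μ * (Module.finrank ℂ W : ℂ) = (Fintype.card G : ℂ) * X.trace := by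
      rw [← htrμ, ← hFid, htrF, htrY]
    field_simp
    linear_combination h1
  -- now take matrices
  have hmat : LinearMap.toMatrix b b F = ∑ g : G, LinearMap.toMatrix b b (ρ g) * X * LinearMap.toMatrix b b (ρ g⁻¹) := by
    rw [hF, map_sum]
    refine Finset.sum_congr rfl fun g _ => ?_
    rw [LinearMap.toMatrix_comp b b b, LinearMap.toMatrix_comp b b b, hY, LinearMap.toMatrix_toLin,
      Matrix.mul_assoc]
  rw [← hmat, hFid, ← hμval, map_smul, LinearMap.toMatrix_id]

theorem schur_orth (ρ : Representation ℂ G W)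
    (hirr : RepIsIrreducible ρ)
    (b : Module.Basis (Fin (Module.finrank ℂ W)) ℂ W)
    (m p k j : Fin (Module.finrank ℂ W)) :
    ∑ g : G, LinearMap.toMatrix b b (ρ g) k m * LinearMap.toMatrix b b (ρ g⁻¹) p j
      = ((Fintype.card G : ℂ) / (Module.finrank ℂ W : ℂ))
          * ((if m = p then (1:ℂ) else 0) * (if k = j then (1:ℂ) else 0)) := by
  set N : G → Matrix (Fin (Module.finrank ℂ W)) (Fin (Module.finrank ℂ W)) ℂ :=
    fun g => LinearMap.toMatrix b b (ρ g) with hN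
  have h := congrArg (fun A : Matrix (Fin (Module.finrank ℂ W)) (Fin (Module.finrank ℂ W)) ℂ => A k j)
    (schur_average ρ hirr b (Matrix.single m p 1))
  simp only [Matrix.sum_apply, Matrix.smul_apply, Matrix.one_apply, smul_eq_mul] at h
  have hterm : ∀ g : G,
      ((N g * Matrix.single m p 1 * N g⁻¹ : Matrix (Fin (Module.finrank ℂ W)) (Fin (Module.finrank ℂ W)) ℂ)) k j = N g k m * N g⁻¹ p j := by
    intro g
    rw [Matrix.mul_assoc, Matrix.mul_apply]
    rw [Finset.sum_eq_single m]
    · rw [Matrix.single_mul_apply_same, one_mul]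
    · intro q _ hq
      rw [Matrix.single_mul_apply_of_ne 1 m p q j hq, mul_zero]
    · intro hm; exact absurd (Finset.mem_univ m) hm
  rw [Finset.sum_congr rfl (fun g _ => hterm g)] at h
  rw [h]
  by_cases h1 : m = p
  · subst h1
    rw [Matrix.trace_single_eq_same]
    by_cases h2 : k = j <;> simp [h2] <;> ring
  · rw [Matrix.trace_single_eq_of_ne m p (1:ℂ) h1]
    simp [h1]

theorem fs_eq_sign (ρ : Representation ℂ G W)
    (hirr : RepIsIrreducible ρ)
    (e : W ≃ₗ[ℂ] Module.Dual ℂ W)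
    (hinv : ∀ (g : G) (v w : W), e (ρ g v) (ρ g w) = e v w)
    (c : ℂ) (hflip : ∀ v w : W, e w v = c * e v w) :
    fsIndicator G ρ = c := by
  classical
  have : Nontrivial W := hirr.1
  set ι := Fin (Module.finrank ℂ W) with hι
  set b : Module.Basis ι ℂ W := Module.finBasis ℂ W with hb
  set M : G → Matrix ι ι ℂ := fun g => LinearMap.toMatrix b b (ρ g) with hM
  -- expansion of ρ g on basis
  have hrep : ∀ (g : G) (j : ι), ρ g (b j) = ∑ q : ι, M g q j • b q := by
    intro g j
    conv_lhs => rw [← Module.Basis.sum_repr b (ρ g (b j))]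
    refine Finset.sum_congr rfl fun q _ => ?_
    simp [hM, LinearMap.toMatrix_apply]
  set E : Matrix ι ι ℂ := Matrix.of (fun k j => e (b k) (b j)) with hE
  -- key intertwining relation
  have hEM : ∀ g : G, E * M g = (M g⁻¹)ᵀ * E := by
    intro g
    ext k j
    have hL : (E * M g) k j = e (b k) (ρ g (b j)) := by
      rw [Matrix.mul_apply, hrep g j, map_sum]
      refine Finset.sum_congr rfl fun q _ => ?_
      rw [map_smul, hE]
      simp [mul_comm]
    have hR : ((M g⁻¹)ᵀ * E) k j = e (ρ g⁻¹ (b k)) (b j) := by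
      rw [Matrix.mul_apply, hrep g⁻¹ k, map_sum]
      simp only [map_smul, LinearMap.smul_apply, LinearMap.sum_apply]
      refine Finset.sum_congr rfl fun q _ => ?_
      rw [Matrix.transpose_apply, hE]
      simp [smul_eq_mul]
    rw [hL, hR]
    have := hinv g (ρ g⁻¹ (b k)) (b j)
    rw [← Module.End.mul_apply, ← map_mul, mul_inv_cancel, map_one, Module.End.one_apply] at this
    exact this
  -- dual family u
  set d : Module.Basis ι ℂ (Module.Dual ℂ W) := b.map e with hd
  set u : ι → W := fun j => (Module.evalEquiv ℂ W).symm (d.dualBasis j) with hu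
  have hud : ∀ k j : ι, e (b k) (u j) = if k = j then 1 else 0 := by
    intro k j
    have h1 : e (b k) (u j) = (Module.evalEquiv ℂ W) (u j) (e (b k)) := rfl
    rw [h1, hu]
    simp only [LinearEquiv.apply_symm_apply]
    have : e (b k) = d k := by rw [hd]; simp [Module.Basis.map_apply]
    rw [this, Module.Basis.dualBasis_apply_self]
  set F : Matrix ι ι ℂ := Matrix.of (fun q j => b.repr (u j) q) with hF
  have hEF : E * F = 1 := by
    ext k j
    have : (E * F) k j = e (b k) (u j) := by
      rw [Matrix.mul_apply]
      conv_rhs => rw [← Module.Basis.sum_repr b (u j), map_sum]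
      refine Finset.sum_congr rfl fun q _ => ?_
      rw [map_smul, hE, hF]
      simp [mul_comm, smul_eq_mul]
    rw [this, hud, Matrix.one_apply]
  have hFE : F * E = 1 := mul_eq_one_comm.mp hEF
  have hET : Eᵀ = c • E := by
    ext k j
    rw [Matrix.transpose_apply, Matrix.smul_apply, hE]
    simp only [Matrix.of_apply, smul_eq_mul]
    exact hflip (b k) (b j)
  -- rewrite M g
  have hMrw : ∀ g : G, M g = F * ((M g⁻¹)ᵀ * E) := by
    intro g
    calc M g = (F * E) * M g := by rw [hFE, Matrix.one_mul]
    _ = F * (E * M g) := by rw [Matrix.mul_assoc]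
    _ = F * ((M g⁻¹)ᵀ * E) := by rw [hEM]
  -- trace per g, expanded
  have htr : ∀ g : G, LinearMap.trace ℂ W (ρ (g * g))
      = ∑ k : ι, ∑ m : ι, ∑ p : ι, ∑ j : ι,
          (F m p * E j k) * (M g k m * M g⁻¹ j p) := by
    intro g
    rw [LinearMap.trace_eq_matrix_trace ℂ b, show LinearMap.toMatrix b b (ρ (g*g)) = M g * M g from by
      rw [map_mul]; exact LinearMap.toMatrix_mul b _ _]
    nth_rewrite 2 [hMrw g]
    rw [Matrix.trace]
    simp only [Matrix.diag_apply, Matrix.mul_apply, Matrix.transpose_apply, Finset.mul_sum,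
      Finset.sum_mul]
    refine Finset.sum_congr rfl fun k _ => Finset.sum_congr rfl fun m _ =>
      Finset.sum_congr rfl fun p _ => Finset.sum_congr rfl fun j _ => ?_
    ring
  -- sum over G
  have hne : ((Module.finrank ℂ W : ℕ) : ℂ) ≠ 0 := by
    have : 0 < Module.finrank ℂ W := Module.finrank_pos
    exact_mod_cast Nat.cast_ne_zero.mpr this.ne'
  have hsum : ∑ g : G, LinearMap.trace ℂ W (ρ (g * g)) = (Fintype.card G : ℂ) * c := by
    set C : ℂ := (Fintype.card G : ℂ) / (Module.finrank ℂ W : ℂ) with hC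
    calc ∑ g : G, LinearMap.trace ℂ W (ρ (g * g))
        = ∑ g : G, ∑ k : ι, ∑ m : ι, ∑ p : ι, ∑ j : ι,
            (F m p * E j k) * (M g k m * M g⁻¹ j p) :=
          Finset.sum_congr rfl fun g _ => htr g
      _ = ∑ k : ι, ∑ m : ι, ∑ p : ι, ∑ j : ι, ∑ g : G,
            (F m p * E j k) * (M g k m * M g⁻¹ j p) := by
          rw [Finset.sum_comm]
          refine Finset.sum_congr rfl fun k _ => ?_
          rw [Finset.sum_comm]
          refine Finset.sum_congr rfl fun m _ => ?_
          rw [Finset.sum_comm]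
          refine Finset.sum_congr rfl fun p _ => ?_
          rw [Finset.sum_comm]
      _ = ∑ k : ι, ∑ m : ι, ∑ p : ι, ∑ j : ι,
            (F m p * E j k) * (C * ((if m = j then (1:ℂ) else 0) * (if k = p then (1:ℂ) else 0))) := by
          refine Finset.sum_congr rfl fun k _ => Finset.sum_congr rfl fun m _ =>
            Finset.sum_congr rfl fun p _ => Finset.sum_congr rfl fun j _ => ?_
          rw [← Finset.mul_sum, schur_orth ρ hirr b m j k p]
      _ = ∑ k : ι, ∑ m : ι, (F m k * E m k) * C := by
          refine Finset.sum_congr rfl fun k _ => Finset.sum_congr rfl fun m _ => ?_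
          rw [Finset.sum_eq_single k]
          · rw [Finset.sum_eq_single m]
            · simp
            · intro j _ hj
              simp [Ne.symm hj]
            · intro hm; exact absurd (Finset.mem_univ m) hm
          · intro p _ hp
            rw [Finset.sum_eq_single m]
            · simp [Ne.symm hp]
            · intro j _ hj
              simp [Ne.symm hj]
            · intro hm; exact absurd (Finset.mem_univ m) hm
          · intro hk; exact absurd (Finset.mem_univ k) hk
      _ = (∑ m : ι, ∑ k : ι, F m k * Eᵀ k m) * C := by
          rw [Finset.sum_comm, Finset.sum_mul]
          refine Finset.sum_congr rfl fun m _ => ?_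
          rw [Finset.sum_mul]
          refine Finset.sum_congr rfl fun k _ => ?_
          rw [Matrix.transpose_apply]
      _ = (F * Eᵀ).trace * C := by
          rw [Matrix.trace]
          simp only [Matrix.diag_apply, Matrix.mul_apply]
      _ = (Fintype.card G : ℂ) * c := by
          rw [hET, Matrix.mul_smul, Matrix.trace_smul, hFE, Matrix.trace_one]
          rw [hC]
          simp only [smul_eq_mul, Finset.card_univ]
          have hcι : Fintype.card ι = Module.finrank ℂ W := Fintype.card_fin _
          rw [hcι]
          field_simp
  rw [fsIndicator, hsum]
  have hcard : ((Fintype.card G : ℕ) : ℂ) ≠ 0 := by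
    exact_mod_cast Nat.cast_ne_zero.mpr Fintype.card_ne_zero
  field_simp

theorem dual_family {κ : Type*} [Fintype κ] [DecidableEq κ]
    (e : W ≃ₗ[ℂ] Module.Dual ℂ W) (b : Module.Basis κ ℂ W) :
    ∃ u : κ → W, ∀ k j, e (b k) (u j) = if k = j then 1 else 0 := by
  refine ⟨fun j => (Module.evalEquiv ℂ W).symm ((b.map e).dualBasis j), fun k j => ?_⟩
  have h1 : e (b k) ((Module.evalEquiv ℂ W).symm ((b.map e).dualBasis j))
      = (Module.evalEquiv ℂ W) ((Module.evalEquiv ℂ W).symm ((b.map e).dualBasis j)) (e (b k)) := rfl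
  rw [h1, LinearEquiv.apply_symm_apply]
  have h2 : e (b k) = (b.map e) k := by simp [Module.Basis.map_apply]
  rw [h2, Module.Basis.dualBasis_apply_self]

theorem basis_expansion {κ : Type*} [Fintype κ] [DecidableEq κ]
    (e : W ≃ₗ[ℂ] Module.Dual ℂ W) (b : Module.Basis κ ℂ W) (u : κ → W)
    (hu : ∀ k j, e (b k) (u j) = if k = j then 1 else 0) (x : W) :
    x = ∑ j : κ, (e x (u j)) • b j := by
  set L : W →ₗ[ℂ] W := ∑ j : κ, ((LinearMap.flip (e.toLinearMap)) (u j)).smulRight (b j) with hL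
  have happ : ∀ y : W, L y = ∑ j : κ, (e y (u j)) • b j := by
    intro y
    rw [hL, LinearMap.sum_apply]
    refine Finset.sum_congr rfl fun j _ => ?_
    rfl
  have hid : L = LinearMap.id := by
    apply Module.Basis.ext b
    intro k
    rw [happ]
    rw [Finset.sum_congr rfl (fun j (_ : j ∈ Finset.univ) => by rw [hu k j])]
    rw [Finset.sum_eq_single k]
    · simp
    · intro j _ hj; simp [Ne.symm hj]
    · intro hk; exact absurd (Finset.mem_univ k) hk
  have := congrArg (fun f : W →ₗ[ℂ] W => f x) hid
  simp only [LinearMap.id_apply] at this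
  nth_rewrite 1 [← this]
  exact happ x


end Aux

set_option maxHeartbeats 1000000 in
/-- If `V₁, …, V_ℓ` are irreducible self-dual finite-dimensional complex representations of a
finite group `G`, then the space of `G`-invariants `H` of `V₁ ⊗ ⋯ ⊗ V_ℓ` carries a
non-degenerate bilinear form which is symmetric if the product of the Frobenius–Schur
indicators is `+1` and antisymmetric if this product is `-1`. -/
theorem exists_nondegenerate_pairing_on_invariants
    {ℓ : ℕ} {G : Type*} [Group G] [Fintype G]
    (V : Fin ℓ → Type*) [∀ i, AddCommGroup (V i)] [∀ i, Module ℂ (V i)]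
    [∀ i, FiniteDimensional ℂ (V i)]
    (ρ : ∀ i, Representation ℂ G (V i))
    (hirr : ∀ i, RepIsIrreducible (ρ i))
    (hsd : ∀ i, RepIsSelfDual (ρ i)) :
    ∃ β : (piTensorRep ρ).invariants →ₗ[ℂ] (piTensorRep ρ).invariants →ₗ[ℂ] ℂ,
      (∀ v, (∀ w, β v w = 0) → v = 0) ∧
      (∀ w, (∀ v, β v w = 0) → w = 0) ∧
      ((∏ i, fsIndicator G (ρ i)) = 1 → ∀ v w, β w v = β v w) ∧
      ((∏ i, fsIndicator G (ρ i)) = -1 → ∀ v w, β w v = -β v w) := by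
  classical
  choose e he using hsd
  have hinv : ∀ i (g : G) (v w : V i), e i (ρ i g v) (ρ i g w) = e i v w :=
    fun i => pairing_inv (ρ i) (e i) (he i)
  have hkey : ∀ i, ∃ c : ℂ, c ≠ 0 ∧ (∀ v w, e i w v = c * e i v w)
      ∧ fsIndicator G (ρ i) = c := by
    intro i
    obtain ⟨c, hc0, hcf⟩ := flip_sign (ρ i) (hirr i) (e i) (he i)
    exact ⟨c, hc0, hcf, fs_eq_sign (ρ i) (hirr i) (e i) (hinv i) c hcf⟩
  choose c hc0 hcflip hcfs using hkey
  -- the bilinear form on the tensor product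
  set toC : (⨂[ℂ] _ : Fin ℓ, ℂ) →ₗ[ℂ] ℂ :=
    PiTensorProduct.lift (MultilinearMap.mkPiAlgebra ℂ (Fin ℓ) ℂ) with htoC
  set Bb : (⨂[ℂ] i, V i) →ₗ[ℂ] (⨂[ℂ] i, V i) →ₗ[ℂ] ℂ :=
    (PiTensorProduct.map₂ (fun i => (e i).toLinearMap)).compr₂ toC with hBbdef
  have hBb : ∀ v w : (Π i, V i),
      Bb (PiTensorProduct.tprod ℂ v) (PiTensorProduct.tprod ℂ w) = ∏ i, e i (v i) (w i) := by
    intro v w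
    rw [hBbdef, LinearMap.compr₂_apply, PiTensorProduct.map₂_tprod_tprod, htoC,
      PiTensorProduct.lift.tprod, MultilinearMap.mkPiAlgebra_apply]
    rfl
  -- extensionality helper for bilinear maps on the tensor product
  have ext2 : ∀ (Φ Ψ : (⨂[ℂ] i, V i) →ₗ[ℂ] (⨂[ℂ] i, V i) →ₗ[ℂ] ℂ),
      (∀ v w : (Π i, V i), Φ (PiTensorProduct.tprod ℂ v) (PiTensorProduct.tprod ℂ w)
        = Ψ (PiTensorProduct.tprod ℂ v) (PiTensorProduct.tprod ℂ w)) → Φ = Ψ := by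
    intro Φ Ψ h
    apply PiTensorProduct.ext
    apply MultilinearMap.ext
    intro v
    simp only [LinearMap.compMultilinearMap_apply]
    apply PiTensorProduct.ext
    apply MultilinearMap.ext
    intro w
    simp only [LinearMap.compMultilinearMap_apply]
    exact h v w
  have htp : ∀ (g : G) (v : Π i, V i), piTensorRep ρ g (PiTensorProduct.tprod ℂ v)
      = PiTensorProduct.tprod ℂ (fun i => ρ i g (v i)) := by
    intro g v
    show PiTensorProduct.mapMonoidHom (fun i => ρ i g) (PiTensorProduct.tprod ℂ v) = _
    rw [PiTensorProduct.mapMonoidHom_apply, PiTensorProduct.map_tprod]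
  -- invariance of Bb
  have hBbG : ∀ (g : G) (x y : ⨂[ℂ] i, V i),
      Bb (piTensorRep ρ g x) (piTensorRep ρ g y) = Bb x y := by
    intro g x y
    have h := ext2 (Bb.compl₁₂ (piTensorRep ρ g) (piTensorRep ρ g)) Bb ?_
    · have := LinearMap.congr_fun (LinearMap.congr_fun h x) y
      rwa [LinearMap.compl₁₂_apply] at this
    · intro v w
      rw [LinearMap.compl₁₂_apply, htp, htp, hBb, hBb]
      exact Finset.prod_congr rfl fun i _ => hinv i g (v i) (w i)
  -- flip relation
  have hBbflip : ∀ x y : ⨂[ℂ] i, V i, Bb y x = (∏ i, c i) * Bb x y := by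
    intro x y
    have h := ext2 Bb.flip ((∏ i, c i) • Bb) ?_
    · have := LinearMap.congr_fun (LinearMap.congr_fun h x) y
      rwa [LinearMap.flip_apply, LinearMap.smul_apply, LinearMap.smul_apply, smul_eq_mul] at this
    · intro v w
      rw [LinearMap.flip_apply, LinearMap.smul_apply, LinearMap.smul_apply, smul_eq_mul, hBb, hBb]
      calc ∏ i, e i (w i) (v i) = ∏ i, (c i * e i (v i) (w i)) :=
            Finset.prod_congr rfl fun i _ => hcflip i (v i) (w i)
        _ = (∏ i, c i) * ∏ i, e i (v i) (w i) := Finset.prod_mul_distrib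
  -- recovery / nondegeneracy on the full tensor product
  have hbu : ∀ i : Fin ℓ, ∃ u : Fin (Module.finrank ℂ (V i)) → V i,
      ∀ k j, e i (Module.finBasis ℂ (V i) k) (u j) = if k = j then 1 else 0 :=
    fun i => dual_family (e i) (Module.finBasis ℂ (V i))
  choose u hu using hbu
  set b : ∀ i : Fin ℓ, Module.Basis (Fin (Module.finrank ℂ (V i))) ℂ (V i) :=
    fun i => Module.finBasis ℂ (V i) with hbdef
  have hrec : ∀ x : ⨂[ℂ] i, V i,
      x = ∑ K : (Π i, Fin (Module.finrank ℂ (V i))),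
        (Bb x (PiTensorProduct.tprod ℂ fun i => u i (K i)))
          • PiTensorProduct.tprod ℂ (fun i => b i (K i)) := by
    have h : (LinearMap.id : (⨂[ℂ] i, V i) →ₗ[ℂ] ⨂[ℂ] i, V i)
        = ∑ K : (Π i, Fin (Module.finrank ℂ (V i))),
            (Bb.flip (PiTensorProduct.tprod ℂ fun i => u i (K i))).smulRight
              (PiTensorProduct.tprod ℂ (fun i => b i (K i))) := by
      apply PiTensorProduct.ext
      apply MultilinearMap.ext
      intro v
      simp only [LinearMap.compMultilinearMap_apply, LinearMap.id_apply, LinearMap.sum_apply,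
        LinearMap.smulRight_apply, LinearMap.flip_apply]
      conv_lhs => rw [show v = (fun i => ∑ j : Fin (Module.finrank ℂ (V i)),
        (e i (v i) (u i j)) • b i j) from funext fun i => basis_expansion (e i) (b i) (u i) (hu i) (v i)]
      rw [MultilinearMap.map_sum (PiTensorProduct.tprod ℂ)]
      refine Finset.sum_congr rfl fun K _ => ?_
      rw [MultilinearMap.map_smul_univ, hBb]
    intro x
    have := LinearMap.congr_fun h x
    simp only [LinearMap.id_apply, LinearMap.sum_apply, LinearMap.smulRight_apply,
      LinearMap.flip_apply] at this
    exact this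
  -- nondegeneracy on the full tensor product
  have nondeg1 : ∀ x : ⨂[ℂ] i, V i, (∀ y, Bb x y = 0) → x = 0 := by
    intro x hx
    rw [hrec x]
    simp [hx]
  have hprodc : (∏ i, c i) ≠ 0 := Finset.prod_ne_zero_iff.mpr fun i _ => hc0 i
  have nondeg2 : ∀ y : ⨂[ℂ] i, V i, (∀ x, Bb x y = 0) → y = 0 := by
    intro y hy
    refine nondeg1 y fun x => ?_
    have := hBbflip x y
    rw [hy x, mul_zero] at this
    exact this
  -- averaging projection onto invariants
  have hcard : ((Fintype.card G : ℕ) : ℂ) ≠ 0 :=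
    Nat.cast_ne_zero.mpr Fintype.card_ne_zero
  set A : (⨂[ℂ] i, V i) →ₗ[ℂ] ⨂[ℂ] i, V i :=
    (Fintype.card G : ℂ)⁻¹ • ∑ g : G, (piTensorRep ρ g) with hA
  have hmul : ∀ (g h : G) (x : ⨂[ℂ] i, V i),
      piTensorRep ρ g (piTensorRep ρ h x) = piTensorRep ρ (g * h) x := by
    intro g h x
    rw [map_mul]
    rfl
  have hAapp : ∀ y, A y = (Fintype.card G : ℂ)⁻¹ • ∑ g : G, piTensorRep ρ g y := by
    intro y
    rw [hA]
    simp [LinearMap.sum_apply]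
  have hA1 : ∀ y, A y ∈ (piTensorRep ρ).invariants := by
    intro y
    rw [Representation.mem_invariants]
    intro h
    rw [hAapp, map_smul, map_sum]
    congr 1
    rw [Finset.sum_congr rfl (fun g (_ : g ∈ Finset.univ) => hmul h g y)]
    exact Fintype.sum_equiv (Equiv.mulLeft h) _ _ fun g => rfl
  have hA2 : ∀ x, x ∈ (piTensorRep ρ).invariants → ∀ y, Bb x (A y) = Bb x y := by
    intro x hx y
    rw [Representation.mem_invariants] at hx
    rw [hAapp, map_smul, map_sum, smul_eq_mul]
    have : ∀ g : G, Bb x (piTensorRep ρ g y) = Bb x y := by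
      intro g
      conv_lhs => rw [← hx g]
      exact hBbG g x y
    rw [Finset.sum_congr rfl fun g _ => this g, Finset.sum_const, Finset.card_univ, nsmul_eq_mul]
    rw [← mul_assoc, inv_mul_cancel₀ hcard, one_mul]
  have hA2' : ∀ y, y ∈ (piTensorRep ρ).invariants → ∀ x, Bb (A x) y = Bb x y := by
    intro y hy x
    rw [Representation.mem_invariants] at hy
    rw [hAapp, map_smul, map_sum, LinearMap.smul_apply, LinearMap.sum_apply, smul_eq_mul]
    have : ∀ g : G, Bb (piTensorRep ρ g x) y = Bb x y := by
      intro g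
      conv_lhs => rw [← hy g]
      exact hBbG g x y
    rw [Finset.sum_congr rfl fun g _ => this g, Finset.sum_const, Finset.card_univ, nsmul_eq_mul]
    rw [← mul_assoc, inv_mul_cancel₀ hcard, one_mul]
  -- define β
  refine ⟨Bb.compl₁₂ (piTensorRep ρ).invariants.subtype (piTensorRep ρ).invariants.subtype,
    ?_, ?_, ?_, ?_⟩
  · intro v hv
    have hz : ∀ y, Bb (v : ⨂[ℂ] i, V i) y = 0 := by
      intro y
      rw [← hA2 (v : ⨂[ℂ] i, V i) v.2 y]
      exact hv ⟨A y, hA1 y⟩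
    exact Subtype.ext (nondeg1 _ hz)
  · intro w hw
    have hz : ∀ x, Bb x (w : ⨂[ℂ] i, V i) = 0 := by
      intro x
      rw [← hA2' (w : ⨂[ℂ] i, V i) w.2 x]
      exact hw ⟨A x, hA1 x⟩
    exact Subtype.ext (nondeg2 _ hz)
  · intro h1 v w
    have hfs : (∏ i, fsIndicator G (ρ i)) = ∏ i, c i :=
      Finset.prod_congr rfl fun i _ => hcfs i
    rw [LinearMap.compl₁₂_apply, LinearMap.compl₁₂_apply, hBbflip]
    rw [← hfs, h1, one_mul]
  · intro h1 v w
    have hfs : (∏ i, fsIndicator G (ρ i)) = ∏ i, c i :=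
      Finset.prod_congr rfl fun i _ => hcfs i
    rw [LinearMap.compl₁₂_apply, LinearMap.compl₁₂_apply, hBbflip]
    rw [← hfs, h1, neg_one_mul]


end
end

section
/- Let S be a type, let f : S → S be an involution (f ∘ f = id), let ℓ be a natural number, let x : Fin ℓ → S, and suppose there exists a permutation π of Fin ℓ such that x(π(i)) = f(x(i)) for all i. Then there exists a permutation σ of Fin ℓ of order at most two (σ ∘ σ = id) such that x(σ(i)) = f(x(i)) for all i. -/
/-- If `f : S → S` is an involution and `x : Fin ℓ → S` admits a permutation `π` with
`x (π i) = f (x i)` for all `i`, then it also admits such a permutation `σ` of order at most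
two, i.e. with `σ ∘ σ = id`. -/
theorem exists_involutive_perm_of_perm {S : Type*} (f : S → S) (hf : f ∘ f = id)
    (ℓ : ℕ) (x : Fin ℓ → S)
    (h : ∃ π : Equiv.Perm (Fin ℓ), ∀ i, x (π i) = f (x i)) :
    ∃ σ : Equiv.Perm (Fin ℓ), (⇑σ ∘ ⇑σ = id) ∧ ∀ i, x (σ i) = f (x i) := by
  classical
  obtain ⟨π, hπ⟩ := h
  have hf' : ∀ s, f (f s) = s := fun s => congrFun hf s
  -- for any value s, the fiber of s and the fiber of f s have the same cardinality
  have hle : ∀ s : S, (Finset.univ.filter (fun j => x j = s)).card ≤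
      (Finset.univ.filter (fun j => x j = f s)).card := by
    intro s
    apply Finset.card_le_card_of_injOn (fun j => π j)
    · intro j hj
      simp only [Finset.mem_coe, Finset.mem_filter, Finset.mem_univ, true_and] at hj ⊢
      rw [hπ, hj]
    · intro a _ b _ hab
      exact π.injective hab
  have hcard : ∀ s : S, (Finset.univ.filter (fun j => x j = s)).card =
      (Finset.univ.filter (fun j => x j = f s)).card := by
    intro s
    refine le_antisymm (hle s) ?_
    have := hle (f s)
    simpa [hf'] using this
  -- sorted lists of fibers
  set lA : Fin ℓ → List (Fin ℓ) :=
    fun i => (Finset.univ.filter (fun j => x j = x i)).sort (· ≤ ·) with hlA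
  set lB : Fin ℓ → List (Fin ℓ) :=
    fun i => (Finset.univ.filter (fun j => x j = f (x i))).sort (· ≤ ·) with hlB
  have hlen : ∀ i, (lA i).length = (lB i).length := by
    intro i; simp [hlA, hlB, Finset.length_sort, hcard (x i)]
  have hmemA : ∀ i, i ∈ lA i := by
    intro i; simp [hlA, Finset.mem_sort]
  have hidx : ∀ i, (lA i).idxOf i < (lB i).length := by
    intro i
    rw [← hlen i]
    exact List.idxOf_lt_length_iff.2 (hmemA i)
  set g : Fin ℓ → Fin ℓ := fun i => (lB i).get ⟨(lA i).idxOf i, hidx i⟩ with hg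
  have hgB : ∀ i, g i ∈ lB i := fun i => List.get_mem _ _
  have hxg : ∀ i, x (g i) = f (x i) := by
    intro i
    have := hgB i
    simp only [hlB, Finset.mem_sort, Finset.mem_filter] at this
    exact this.2
  have hAg : ∀ i, lA (g i) = lB i := by
    intro i
    simp only [hlA, hlB, hxg i]
  have hBg : ∀ i, lB (g i) = lA i := by
    intro i
    simp only [hlA, hlB, hxg i, hf']
  have hnodupB : ∀ i, (lB i).Nodup := fun i => Finset.sort_nodup _ _
  have hginv : Function.Involutive g := by
    intro i
    have h1 : (lA (g i)).idxOf (g i) = (lA i).idxOf i := by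
      rw [hAg i]
      exact List.get_idxOf (hnodupB i) _
    have h2 : g (g i) = (lB (g i)).get ⟨(lA (g i)).idxOf (g i), hidx (g i)⟩ := rfl
    have hlt : (lA i).idxOf i < (lA i).length :=
      List.idxOf_lt_length_iff.2 (hmemA i)
    rw [h2, List.get_of_eq (hBg i)]
    convert List.idxOf_get hlt using 2
    simpa using h1
  refine ⟨hginv.toPerm, ?_, ?_⟩
  · funext i
    exact hginv i
  · intro i
    exact hxg i
end
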